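/- arXiv:math/0407440 — 3 statements merged into one kernel-verified Lean document; each statement's English description precedes it below -/
import Mathlib

section
/- Suppose α is an ordinal with 3 ≤ α ≤ κ and I_{κ,λ}⁺ →_{κ,κ} (I_{κ,λ}⁺; α)². Then σ < non̄_κ(J⁺ → (J⁺, α)²) for every σ ∈ K(κ,λ); that is, for every σ ∈ K(κ,λ), every ideal J on κ with cof̄(J) ≤ σ satisfies J⁺ → (J⁺, α)². -/
open Cardinal Set

namespace PaperFormal

noncomputable section

/-- The least (small) cardinality of a family `F : Set X` satisfying `P`. -/
def leastCard {X : Type 1} (P : Set X → Prop) : Cardinal.{0} :=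
  sInf {c : Cardinal.{0} | ∃ F : Set X, P F ∧ Cardinal.lift.{1} c = #F}

/-- The collection of (codings of) functions from `κ` to `κ`. -/
def funOn (κ : Cardinal.{0}) : Set (Ordinal.{0} → Ordinal.{0}) :=
  {f | ∀ α < κ.ord, f α < κ.ord}

/-- The unequality number `U_κ`. -/
def uneq (κ : Cardinal.{0}) : Cardinal.{0} :=
  leastCard fun F : Set (Ordinal.{0} → Ordinal.{0}) => F ⊆ funOn κ ∧
    ∀ g ∈ funOn κ, ∃ f ∈ F, {α | α < κ.ord ∧ f α = g α} = ∅

/-- The dominating number `d_κ`. -/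
def domNum (κ : Cardinal.{0}) : Cardinal.{0} :=
  leastCard fun F : Set (Ordinal.{0} → Ordinal.{0}) => F ⊆ funOn κ ∧
    ∀ g ∈ funOn κ, ∃ f ∈ F, ∀ α < κ.ord, g α < f α

/-- The number `d̄_κ`. -/
def domBar (κ : Cardinal.{0}) : Cardinal.{0} :=
  leastCard fun X : Set (Ordinal.{0} → Ordinal.{0}) => X ⊆ funOn κ ∧
    ∀ g ∈ funOn κ, ∃ x ⊆ X, x.Nonempty ∧ #x < Cardinal.lift.{1} κ ∧
      ∀ α < κ.ord, g α < sSup {o | ∃ f ∈ x, f α = o}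

/-- The generalized Cantor space `^ρ2`, with points coded as subsets of `Iio ρ.ord`. -/
def cantor (ρ : Cardinal.{0}) : Set (Set Ordinal.{0}) := {x | x ⊆ Iio ρ.ord}

/-- A forcing condition: a pair `(a, t)` with `t ⊆ a ⊆ Iio ρ.ord` and `|a| < ν`. -/
def IsCond (ν ρ : Cardinal.{0}) (a t : Set Ordinal.{0}) : Prop :=
  a ⊆ Iio ρ.ord ∧ t ⊆ a ∧ #a < Cardinal.lift.{1} ν

/-- The basic open set determined by a condition. -/
def basicOpen (ρ : Cardinal.{0}) (a t : Set Ordinal.{0}) : Set (Set Ordinal.{0}) :=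
  {x | x ⊆ Iio ρ.ord ∧ x ∩ a = t}

/-- Dense open subsets of `^ρ2` (for the `<ν`-support topology). -/
def DenseOpen (ν ρ : Cardinal.{0}) (D : Set (Set Ordinal.{0})) : Prop :=
  D ⊆ cantor ρ ∧
  (∀ x ∈ D, ∃ a t, IsCond ν ρ a t ∧ x ∈ basicOpen ρ a t ∧ basicOpen ρ a t ⊆ D) ∧
  (∀ a t, IsCond ν ρ a t → (basicOpen ρ a t ∩ D).Nonempty)

/-- Members of `M_{ν,ρ}`. -/
def Meager (ν ρ : Cardinal.{0}) (W : Set (Set Ordinal.{0})) : Prop :=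
  W ⊆ cantor ρ ∧ ∃ X : Set (Set (Set Ordinal.{0})), X.Nonempty ∧
    #X ≤ Cardinal.lift.{1} ν ∧ (∀ D ∈ X, DenseOpen ν ρ D) ∧ W ∩ ⋂₀ X = ∅

/-- The covering number for category `cov(M_{ν,ρ})`. -/
def covM (ν ρ : Cardinal.{0}) : Cardinal.{0} :=
  leastCard fun Y : Set (Set (Set Ordinal.{0})) =>
    (∀ W ∈ Y, Meager ν ρ W) ∧ ⋃₀ Y = cantor ρ

/-- A (`κ`-complete) ideal on `κ`. -/
structure IdealK (κ : Cardinal.{0}) where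
  mem : Set (Set Ordinal.{0})
  subset_iio : ∀ A ∈ mem, A ⊆ Iio κ.ord
  singleton_mem : ∀ α < κ.ord, {α} ∈ mem
  subset_mem : ∀ A ∈ mem, ∀ B ⊆ A, B ∈ mem
  sUnion_mem : ∀ X : Set (Set Ordinal.{0}), X ⊆ mem → #X < Cardinal.lift.{1} κ → ⋃₀ X ∈ mem
  ne_top : Iio κ.ord ∉ mem

/-- `J⁺`, the sets (⊆ κ) not in the ideal. -/
def IdealK.plus {κ : Cardinal.{0}} (J : IdealK κ) : Set (Set Ordinal.{0}) :=
  {A | A ⊆ Iio κ.ord ∧ A ∉ J.mem}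

/-- `cof(J)`. -/
def IdealK.cof {κ : Cardinal.{0}} (J : IdealK κ) : Cardinal.{0} :=
  leastCard fun X : Set (Set Ordinal.{0}) =>
    X ⊆ J.mem ∧ ∀ A, A ∈ J.mem ↔ ∃ B ∈ X, A ⊆ B

/-- `cof̄(J)`. -/
def IdealK.cofBar {κ : Cardinal.{0}} (J : IdealK κ) : Cardinal.{0} :=
  leastCard fun X : Set (Set Ordinal.{0}) =>
    X ⊆ J.mem ∧ ∀ A ∈ J.mem, ∃ x ⊆ X, #x < Cardinal.lift.{1} κ ∧ A ⊆ ⋃₀ x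

/-- `non_κ(P)`. -/
def nonK (κ : Cardinal.{0}) (P : IdealK κ → Prop) : Cardinal.{0} :=
  sInf {c | ∃ J : IdealK κ, J.cof = c ∧ ¬ P J}

/-- `non̄_κ(P)`. -/
def nonBarK (κ : Cardinal.{0}) (P : IdealK κ → Prop) : Cardinal.{0} :=
  sInf {c | ∃ J : IdealK κ, J.cofBar = c ∧ ¬ P J}

/-- Weak `P`-point. -/
def WeakPPoint {κ : Cardinal.{0}} (J : IdealK κ) : Prop :=
  ∀ A ∈ J.plus, ∀ f : Ordinal.{0} → Ordinal.{0},
    (∀ α ∈ A, f α < κ.ord) → (∀ β, {α ∈ A | f α = β} ∈ J.mem) →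
    ∃ B ∈ J.plus, B ⊆ A ∧ ∀ β, #{α ∈ B | f α = β} < Cardinal.lift.{1} κ

/-- Weak `Q`-point. -/
def WeakQPoint {κ : Cardinal.{0}} (J : IdealK κ) : Prop :=
  ∀ A ∈ J.plus, ∀ g ∈ funOn κ,
    ∃ B ∈ J.plus, B ⊆ A ∧ ∀ α ∈ B, ∀ β ∈ B, α < β → g α < β

/-- Weakly selective ideal. -/
def WeaklySelective {κ : Cardinal.{0}} (J : IdealK κ) : Prop :=
  WeakPPoint J ∧ WeakQPoint J

/-- Weak semi-`Q`-point. -/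
def WeakSemiQPoint {κ : Cardinal.{0}} (J : IdealK κ) : Prop :=
  ∀ A ∈ J.plus, ∀ f : Ordinal.{0} → Ordinal.{0},
    (∀ α ∈ A, f α < κ.ord) →
    (∀ β, #{α ∈ A | f α = β} < Cardinal.lift.{1} κ) →
    ∃ C ∈ J.plus, C ⊆ A ∧ ∀ β < κ.ord, #{α ∈ C | f α = β} ≤ Cardinal.lift.{1} β.card

/-- `P_κ(λ)`, coded as the small subsets of `Iio λ.ord`. -/
def smallSet (κ lam : Cardinal.{0}) : Set (Set Ordinal.{0}) :=
  {a | a ⊆ Iio lam.ord ∧ #a < Cardinal.lift.{1} κ}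

/-- The ideal `I_{κ,λ}` of noncofinal subsets of `P_κ(λ)`. -/
def Ikl (κ lam : Cardinal.{0}) : Set (Set (Set Ordinal.{0})) :=
  {A | A ⊆ smallSet κ lam ∧ ∃ a ∈ smallSet κ lam, ∀ b ∈ A, ¬ a ⊆ b}

/-- A (`κ`-complete fine) ideal on `P_κ(λ)`. -/
structure IdealP (κ lam : Cardinal.{0}) where
  mem : Set (Set (Set Ordinal.{0}))
  subset_pk : ∀ A ∈ mem, A ⊆ smallSet κ lam
  fine : Ikl κ lam ⊆ mem
  subset_mem : ∀ A ∈ mem, ∀ B ⊆ A, B ∈ mem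
  sUnion_mem : ∀ X : Set (Set (Set Ordinal.{0})), X ⊆ mem →
    #X < Cardinal.lift.{1} κ → ⋃₀ X ∈ mem
  ne_top : smallSet κ lam ∉ mem

/-- `H⁺` computed from the underlying collection `Hm` of an ideal on `P_κ(λ)`. -/
def plusOf (κ lam : Cardinal.{0}) (Hm : Set (Set (Set Ordinal.{0}))) :
    Set (Set (Set Ordinal.{0})) :=
  {A | A ⊆ smallSet κ lam ∧ A ∉ Hm}

/-- `H⁺`. -/
def IdealP.plus {κ lam : Cardinal.{0}} (H : IdealP κ lam) : Set (Set (Set Ordinal.{0})) :=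
  plusOf κ lam H.mem

/-- `cof(H)`. -/
def IdealP.cof {κ lam : Cardinal.{0}} (H : IdealP κ lam) : Cardinal.{0} :=
  leastCard fun X : Set (Set (Set Ordinal.{0})) =>
    X ⊆ H.mem ∧ ∀ A, A ∈ H.mem ↔ ∃ B ∈ X, A ⊆ B

/-- `cof̄(H)`. -/
def IdealP.cofBar {κ lam : Cardinal.{0}} (H : IdealP κ lam) : Cardinal.{0} :=
  leastCard fun X : Set (Set (Set Ordinal.{0})) =>
    X ⊆ H.mem ∧ ∀ A ∈ H.mem, ∃ x ⊆ X, #x < Cardinal.lift.{1} κ ∧ A ⊆ ⋃₀ x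

/-- `d^κ_{κ,λ}`. -/
def domP (κ lam : Cardinal.{0}) : Cardinal.{0} :=
  leastCard fun F : Set (Ordinal.{0} → Set Ordinal.{0}) =>
    (∀ f ∈ F, ∀ α < κ.ord, f α ∈ smallSet κ lam) ∧
    ∀ g : Ordinal.{0} → Set Ordinal.{0}, (∀ α < κ.ord, g α ∈ smallSet κ lam) →
      ∃ f ∈ F, ∀ α < κ.ord, g α ⊆ f α

/-- A maximal almost disjoint family of size `≥ κ` for `H` (a member of `M_H^{≥κ}`). -/
def IsMad {κ lam : Cardinal.{0}} (H : IdealP κ lam) (Q : Set (Set (Set Ordinal.{0}))) : Prop :=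
  Q ⊆ H.plus ∧ Cardinal.lift.{1} κ ≤ #Q ∧
  (∀ A ∈ Q, ∀ B ∈ Q, A ≠ B → A ∩ B ∈ H.mem) ∧
  ∀ C ∈ H.plus, ∃ A ∈ Q, A ∩ C ∈ H.plus

/-- The (small) cardinal `c` with `lift c = c'`, used to pull `λ^{<κ} = |P_κ(λ)|` down. -/
def downCard (c : Cardinal.{1}) : Cardinal.{0} :=
  sInf {d : Cardinal.{0} | Cardinal.lift.{1} d = c}

open Classical in
/-- The number `a_H`. -/
def aNum {κ lam : Cardinal.{0}} (H : IdealP κ lam) : Cardinal.{0} :=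
  if ∃ Q, IsMad H Q then sInf {c | ∃ Q, IsMad H Q ∧ Cardinal.lift.{1} c = #Q}
  else 2 ^ Order.succ (downCard #(smallSet κ lam))

/-- Weak `π`-point. -/
def WeakPiPoint {κ lam : Cardinal.{0}} (H : IdealP κ lam) : Prop :=
  ∀ f : Ordinal.{0} → Set (Set Ordinal.{0}), (∀ α < κ.ord, f α ∈ H.mem) →
    ∀ A ∈ H.plus, ∃ B ∈ H.plus, B ⊆ A ∧ ∀ α < κ.ord, B ∩ f α ∈ Ikl κ lam

/-- `∪(a ∩ κ)`. -/
def supK (κ : Cardinal.{0}) (a : Set Ordinal.{0}) : Ordinal.{0} :=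
  sSup (a ∩ Iio κ.ord)

/-- The relation `a ≺ b`. -/
def prec (κ : Cardinal.{0}) (a b : Set Ordinal.{0}) : Prop :=
  a ⊆ b ∧ supK κ a < supK κ b

/-- `[A]_κ²`. -/
def pairsK (κ : Cardinal.{0}) (A : Set (Set Ordinal.{0})) : Set (Ordinal.{0} × Set Ordinal.{0}) :=
  {p | ∃ a ∈ A, ∃ b ∈ A, supK κ a < supK κ b ∧ p = (supK κ a, b)}

/-- `[A]_≺²`. -/
def pairsPrec (κ : Cardinal.{0}) (A : Set (Set Ordinal.{0})) :
    Set (Ordinal.{0} × Set Ordinal.{0}) :=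
  {p | ∃ a ∈ A, ∃ b ∈ A, prec κ a b ∧ p = (supK κ a, b)}

/-- `[A]_{κ,κ}²`. -/
def pairsKK (κ : Cardinal.{0}) (A : Set (Set Ordinal.{0})) : Set (Ordinal.{0} × Ordinal.{0}) :=
  {p | ∃ a ∈ A, ∃ b ∈ A, supK κ a < supK κ b ∧ p = (supK κ a, supK κ b)}

/-- `S` is a set of ordinals of order type `α`. -/
def OrdType (S : Set Ordinal.{0}) (α : Ordinal.{0}) : Prop :=
  ∃ e : Ordinal.{0} → Ordinal.{0},
    (∀ i < α, ∀ j < α, i < j → e i < e j) ∧ e '' Iio α = S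

/-- `(B, ≺)` has order type `α`. -/
def OrdTypePrec (κ : Cardinal.{0}) (B : Set (Set Ordinal.{0})) (α : Ordinal.{0}) : Prop :=
  ∃ e : Ordinal.{0} → Set Ordinal.{0},
    (∀ i < α, ∀ j < α, i < j → prec κ (e i) (e j)) ∧ e '' Iio α = B

/-- The partition relation `κ → (κ, θ)²`. -/
def ArrowKTheta (κ : Cardinal.{0}) (θ : Ordinal.{0}) : Prop :=
  ∀ f : Ordinal.{0} → Ordinal.{0} → Fin 2, ∃ A ⊆ Iio κ.ord,
    (OrdType A κ.ord ∧ ∀ α ∈ A, ∀ β ∈ A, α < β → f α β = 0) ∨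
    (OrdType A θ ∧ ∀ α ∈ A, ∀ β ∈ A, α < β → f α β = 1)

/-- `κ` is weakly compact. -/
def WeaklyCompact (κ : Cardinal.{0}) : Prop :=
  ∀ f : Ordinal.{0} → Ordinal.{0} → Fin 2, ∃ A ⊆ Iio κ.ord,
    OrdType A κ.ord ∧ ∃ i, ∀ α ∈ A, ∀ β ∈ A, α < β → f α β = i

/-- The partition relation `J⁺ → (J⁺, α)²` for an ideal on `κ`. -/
def ArrowJ {κ : Cardinal.{0}} (J : IdealK κ) (α : Ordinal.{0}) : Prop :=
  ∀ A ∈ J.plus, ∀ f : Ordinal.{0} → Ordinal.{0} → Fin 2,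
    ∃ B ⊆ A, (B ∈ J.plus ∧ ∀ β ∈ B, ∀ γ ∈ B, β < γ → f β γ = 0) ∨
             (OrdType B α ∧ ∀ β ∈ B, ∀ γ ∈ B, β < γ → f β γ = 1)

/-- The square bracket relation `J⁺ → [J⁺]_ρ²` for an ideal on `κ`. -/
def SqBrJ {κ : Cardinal.{0}} (J : IdealK κ) (ρ : Cardinal.{0}) : Prop :=
  ∀ A ∈ J.plus, ∀ f : Ordinal.{0} → Ordinal.{0} → Ordinal.{0},
    (∀ β ∈ A, ∀ γ ∈ A, β < γ → f β γ < ρ.ord) →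
    ∃ B ∈ J.plus, B ⊆ A ∧ {ξ | ∃ β ∈ B, ∃ γ ∈ B, β < γ ∧ f β γ = ξ} ≠ Iio ρ.ord

/-- `H⁺ →_κ (H⁺, α)²`. -/
def ArrowP (κ lam : Cardinal.{0}) (Hm : Set (Set (Set Ordinal.{0}))) (α : Ordinal.{0}) : Prop :=
  ∀ F : Ordinal.{0} → Set Ordinal.{0} → Fin 2, ∀ A ∈ plusOf κ lam Hm,
    ∃ B ⊆ A, (B ∈ plusOf κ lam Hm ∧ ∀ p ∈ pairsK κ B, F p.1 p.2 = 0) ∨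
             (OrdTypePrec κ B α ∧ ∀ p ∈ pairsK κ B, F p.1 p.2 = 1)

/-- `H⁺ →_{κ,κ} (H⁺, α)²`. -/
def ArrowPKK (κ lam : Cardinal.{0}) (Hm : Set (Set (Set Ordinal.{0}))) (α : Ordinal.{0}) : Prop :=
  ∀ F : Ordinal.{0} → Ordinal.{0} → Fin 2, ∀ A ∈ plusOf κ lam Hm,
    ∃ B ⊆ A, (B ∈ plusOf κ lam Hm ∧ ∀ p ∈ pairsKK κ B, F p.1 p.2 = 0) ∨
             (OrdTypePrec κ B α ∧ ∀ p ∈ pairsKK κ B, F p.1 p.2 = 1)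

/-- `H⁺ →_{κ,κ} (H⁺; α)²`. -/
def ArrowPKKsemi (κ lam : Cardinal.{0}) (Hm : Set (Set (Set Ordinal.{0}))) (α : Ordinal.{0}) :
    Prop :=
  ∀ F : Ordinal.{0} → Ordinal.{0} → Fin 2, ∀ A ∈ plusOf κ lam Hm,
    ∃ B ⊆ A, (B ∈ plusOf κ lam Hm ∧ ∀ p ∈ pairsKK κ B, F p.1 p.2 = 0) ∨
             (OrdType {o | ∃ a ∈ B, supK κ a = o} α ∧ ∀ p ∈ pairsKK κ B, F p.1 p.2 = 1)

/-- `H⁺ →_κ (H⁺)²`. -/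
def ArrowPConst (κ lam : Cardinal.{0}) (Hm : Set (Set (Set Ordinal.{0}))) : Prop :=
  ∀ F : Ordinal.{0} → Set Ordinal.{0} → Fin 2, ∀ A ∈ plusOf κ lam Hm,
    ∃ B ∈ plusOf κ lam Hm, B ⊆ A ∧ ∃ i, ∀ p ∈ pairsK κ B, F p.1 p.2 = i

/-- `H⁺ →_{κ,κ} [H⁺]_ρ²`. -/
def SqBrPKK (κ lam : Cardinal.{0}) (Hm : Set (Set (Set Ordinal.{0}))) (ρ : Cardinal.{0}) : Prop :=
  ∀ F : Ordinal.{0} → Ordinal.{0} → Ordinal.{0},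
    (∀ α β : Ordinal.{0}, α < β → β < κ.ord → F α β < ρ.ord) →
    ∀ A ∈ plusOf κ lam Hm, ∃ B ∈ plusOf κ lam Hm, B ⊆ A ∧
      {ξ | ∃ p ∈ pairsKK κ B, F p.1 p.2 = ξ} ≠ Iio ρ.ord

/-- The class `K(κ,λ)`. -/
def Kset (κ lam : Cardinal.{0}) : Set Cardinal.{0} :=
  {σ | lam ≤ σ ∧ ∃ T ⊆ smallSet κ lam, Cardinal.lift.{1} σ = #T ∧
    ∀ a ∈ smallSet κ lam, #{t ∈ T | t ⊆ a} < Cardinal.lift.{1} κ}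

end

end PaperFormal

namespace PaperFormal

/-! ### Auxiliary lemmas for Statement 13 -/

section Aux

lemma aux_sSup_lt_of_small {κ : Cardinal.{0}} (hreg : κ.IsRegular) {s : Set Ordinal.{0}}
    (hs : #s < Cardinal.lift.{1} κ) (hb : ∀ o ∈ s, o < κ.ord) : sSup s < κ.ord := by
  rcases s.eq_empty_or_nonempty with rfl | hne
  · rw [csSup_empty]
    rw [Cardinal.lt_ord]
    simpa using hreg.aleph0_le.trans_lt' aleph0_pos
  · set s' : Set κ.ord.ToType := (Ordinal.ToType.mk (o := κ.ord)) '' {x : Set.Iio κ.ord | ↑x ∈ s}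
      with hs'
    have hequiv : Nonempty (↥s' ≃ ↥s) := by
      refine ⟨((Equiv.Set.image _ _ (Ordinal.ToType.mk (o := κ.ord)).injective).symm).trans
        ⟨fun x => ⟨↑x.1, x.2⟩, fun o => ⟨⟨o.1, hb o.1 o.2⟩, o.2⟩, fun x => by ext; rfl,
         fun o => rfl⟩⟩
    have hcard : Cardinal.lift.{1,0} #s' = Cardinal.lift.{0,1} #s :=
      Cardinal.lift_mk_eq'.2 hequiv
    rw [Cardinal.lift_id'] at hcard
    have hlt : #s' < κ := Cardinal.lift_lt.1 (hcard ▸ hs)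
    set f : ↥s' → Ordinal.{0} := fun x => ((Ordinal.ToType.mk (o := κ.ord)).symm x.1 : Set.Iio κ.ord)
      with hf
    have hfs : iSup f < κ.ord := by
      apply Ordinal.iSup_lt_ord
      · rwa [hreg.cof_eq]
      · intro i; exact ((Ordinal.ToType.mk (o := κ.ord)).symm i.1).2
    refine lt_of_le_of_lt (csSup_le hne ?_) hfs
    intro o ho
    have : o = f ⟨(Ordinal.ToType.mk (o := κ.ord)) ⟨o, hb o ho⟩, ⟨⟨o, hb o ho⟩, ho, rfl⟩⟩ := by
      simp [hf]
    rw [this]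
    exact le_ciSup (Ordinal.bddAbove_range f) _

lemma aux_lift_regular_cof {κ : Cardinal.{0}} (hreg : κ.IsRegular) :
    (Cardinal.lift.{1} κ).ord.cof = Cardinal.lift.{1} κ := by
  rw [← Cardinal.lift_ord, ← Ordinal.lift_cof, hreg.cof_eq]

lemma aux_aleph0_le_lift {κ : Cardinal.{0}} (hreg : κ.IsRegular) :
    ℵ₀ ≤ Cardinal.lift.{1} κ := by
  simpa using Cardinal.lift_le.{1}.2 hreg.aleph0_le

lemma aux_mk_sUnion_lt {κ : Cardinal.{0}} (hreg : κ.IsRegular) {x : Set (Set Ordinal.{0})}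
    (hx : #x < Cardinal.lift.{1} κ) (h : ∀ s ∈ x, #s < Cardinal.lift.{1} κ) :
    #(⋃₀ x) < Cardinal.lift.{1} κ := by
  refine lt_of_le_of_lt (Cardinal.mk_sUnion_le x) ?_
  refine Cardinal.mul_lt_of_lt (aux_aleph0_le_lift hreg) hx ?_
  exact Ordinal.iSup_lt (by rwa [aux_lift_regular_cof hreg]) (fun s => h s s.2)

lemma aux_succ_lt_ord {κ : Cardinal.{0}} (hreg : κ.IsRegular) {o : Ordinal.{0}}
    (h : o < κ.ord) : o + 1 < κ.ord := by
  rw [Ordinal.add_one_eq_succ]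
  exact (Cardinal.isSuccLimit_ord hreg.aleph0_le).succ_lt h

lemma aux_supK_lt {κ : Cardinal.{0}} (hreg : κ.IsRegular) {a : Set Ordinal.{0}}
    (ha : #a < Cardinal.lift.{1} κ) : supK κ a < κ.ord :=
  aux_sSup_lt_of_small hreg
    (lt_of_le_of_lt (Cardinal.mk_le_mk_of_subset inter_subset_left) ha)
    (fun _ ho => ho.2)

lemma aux_le_supK {κ : Cardinal.{0}} {a : Set Ordinal.{0}} {o : Ordinal.{0}}
    (ho : o ∈ a) (ho2 : o < κ.ord) : o ≤ supK κ a :=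
  le_csSup ⟨κ.ord, fun _ hp => hp.2.le⟩ ⟨ho, ho2⟩

lemma aux_supK_mono {κ : Cardinal.{0}} {a b : Set Ordinal.{0}} (hab : a ⊆ b) :
    supK κ a ≤ supK κ b := by
  rcases (a ∩ Iio κ.ord).eq_empty_or_nonempty with he | hne
  · rw [supK, he, csSup_empty]; exact zero_le
  · exact csSup_le_csSup ⟨κ.ord, fun _ hp => hp.2.le⟩ hne
      (inter_subset_inter_left _ hab)

lemma aux_supK_insert {κ : Cardinal.{0}} {c : Set Ordinal.{0}} {γ : Ordinal.{0}}
    (hγ : γ < κ.ord) (hc : supK κ c < γ) : supK κ (insert γ c) = γ := by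
  apply le_antisymm
  · refine csSup_le ⟨γ, ⟨mem_insert _ _, hγ⟩⟩ ?_
    rintro o ⟨ho, ho2⟩
    rcases ho with rfl | ho
    · exact le_rfl
    · exact (aux_le_supK ho ho2).trans hc.le
  · exact aux_le_supK (mem_insert _ _) hγ

lemma aux_union_mem {κ : Cardinal.{0}} (hreg : κ.IsRegular) (J : IdealK κ)
    {S₁ S₂ : Set Ordinal.{0}} (h₁ : S₁ ∈ J.mem) (h₂ : S₂ ∈ J.mem) : S₁ ∪ S₂ ∈ J.mem := by
  have : S₁ ∪ S₂ = ⋃₀ {S₁, S₂} := by simp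
  rw [this]
  apply J.sUnion_mem
  · rintro s hs
    rcases hs with rfl | rfl
    · exact h₁
    · exact h₂
  · have h2 : #({S₁, S₂} : Set (Set Ordinal.{0})) ≤ 2 := by
      refine Cardinal.mk_insert_le.trans ?_
      rw [Cardinal.mk_singleton, one_add_one_eq_two]
    refine h2.trans_lt (lt_of_lt_of_le ?_ (aux_aleph0_le_lift hreg))
    exact Cardinal.nat_lt_aleph0 2

lemma aux_bounded_mem {κ : Cardinal.{0}} (hreg : κ.IsRegular) (J : IdealK κ)
    {B : Set Ordinal.{0}} {β : Ordinal.{0}} (hβ : β < κ.ord) (hB : ∀ γ ∈ B, γ ≤ β) :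
    B ∈ J.mem := by
  have hBsub : B ⊆ Iio κ.ord := fun γ hγ => lt_of_le_of_lt (hB γ hγ) hβ
  have hB' : B = ⋃₀ ((fun o => ({o} : Set Ordinal.{0})) '' B) := by
    ext o; simp
  rw [hB']
  apply J.sUnion_mem
  · rintro _ ⟨γ, hγ, rfl⟩
    exact J.singleton_mem γ (hBsub hγ)
  · refine lt_of_le_of_lt Cardinal.mk_image_le ?_
    refine lt_of_le_of_lt (Cardinal.mk_le_mk_of_subset (t := Iio (β + 1))
      (fun γ hγ => lt_of_le_of_lt (hB γ hγ) (lt_add_one β))) ?_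
    rw [Ordinal.mk_Iio_ordinal]
    rw [Cardinal.lift_lt]
    rw [← Cardinal.lt_ord]
    exact aux_succ_lt_ord hreg hβ

lemma aux_plus_unbounded {κ : Cardinal.{0}} (hreg : κ.IsRegular) (J : IdealK κ)
    {A S : Set Ordinal.{0}} (hA : A ∈ J.plus) (hS : S ∈ J.mem) {β : Ordinal.{0}}
    (hβ : β < κ.ord) : ∃ γ ∈ A, γ ∉ S ∧ β < γ := by
  have hdiff : A \ S ∉ J.mem := by
    intro hd
    exact hA.2 (J.subset_mem _ (aux_union_mem hreg J hd hS) A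
      (fun γ hγ => by by_cases h : γ ∈ S; exacts [Or.inr h, Or.inl ⟨hγ, h⟩]))
  by_contra hcon
  push_neg at hcon
  exact hdiff (aux_bounded_mem hreg J hβ
    (fun γ hγ => hcon γ hγ.1 hγ.2))

end Aux

/-- Suppose `3 ≤ α ≤ κ` and `I_{κ,λ}⁺ →_{κ,κ} (I_{κ,λ}⁺; α)²`. Then for every
`σ ∈ K(κ,λ)`, every ideal `J` on `κ` with `cof̄(J) ≤ σ` satisfies `J⁺ → (J⁺, α)²`. -/
theorem arrowJ_of_arrowPKKsemi (κ lam : Cardinal.{0}) (hreg : κ.IsRegular) (huc : ℵ₀ < κ)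
    (hlt : κ < lam) (α : Ordinal.{0}) (hα3 : 3 ≤ α) (hακ : α ≤ κ.ord)
    (h : ArrowPKKsemi κ lam (Ikl κ lam) α) :
    ∀ σ ∈ Kset κ lam, ∀ J : IdealK κ, J.cofBar ≤ σ → ArrowJ J α := by
  classical
  rintro σ ⟨hlamsig, T, hTsub, hTcard, hTsmall⟩ J hcof A hAplus f
  have hAsub : A ⊆ Iio κ.ord := hAplus.1
  have hAmem : A ∉ J.mem := hAplus.2
  have hzero : (0 : Ordinal.{0}) < κ.ord := by
    rw [Cardinal.lt_ord]; simpa using hreg.aleph0_le.trans_lt' aleph0_pos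
  have h0mem : ({0} : Set Ordinal.{0}) ∈ J.mem := J.singleton_mem 0 hzero
  -- extract a witness for cof̄(J)
  have hJmemcard : ∃ c : Cardinal.{0}, Cardinal.lift.{1} c = #J.mem := by
    refine Cardinal.mem_range_lift_of_le (a := 2 ^ κ) ?_
    have hinj : #J.mem ≤ #(Set ↥(Iio κ.ord : Set Ordinal.{0})) := by
      refine Cardinal.mk_le_of_injective
        (f := fun A => {x : ↥(Iio κ.ord : Set Ordinal.{0}) | ↑x ∈ (A : Set Ordinal.{0})}) ?_
      rintro ⟨A₁, hA₁⟩ ⟨A₂, hA₂⟩ hEq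
      have hEq' : {x : ↥(Iio κ.ord : Set Ordinal.{0}) | ↑x ∈ A₁} =
          {x : ↥(Iio κ.ord : Set Ordinal.{0}) | ↑x ∈ A₂} := hEq
      ext1
      ext o
      constructor
      · intro ho
        have hoκ : o < κ.ord := J.subset_iio A₁ hA₁ ho
        have h1 : (⟨o, hoκ⟩ : ↥(Iio κ.ord : Set Ordinal.{0})) ∈
            {x : ↥(Iio κ.ord : Set Ordinal.{0}) | ↑x ∈ A₁} := ho
        rw [hEq'] at h1
        exact h1
      · intro ho
        have hoκ : o < κ.ord := J.subset_iio A₂ hA₂ ho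
        have h1 : (⟨o, hoκ⟩ : ↥(Iio κ.ord : Set Ordinal.{0})) ∈
            {x : ↥(Iio κ.ord : Set Ordinal.{0}) | ↑x ∈ A₂} := ho
        rw [← hEq'] at h1
        exact h1
    refine hinj.trans (le_of_eq ?_)
    rw [Cardinal.mk_set, Ordinal.mk_Iio_ordinal, Cardinal.card_ord, Cardinal.lift_two_power]
  have hwit : ∃ X : Set (Set Ordinal.{0}),
      (X ⊆ J.mem ∧ ∀ A ∈ J.mem, ∃ x ⊆ X, #x < Cardinal.lift.{1} κ ∧ A ⊆ ⋃₀ x) ∧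
      Cardinal.lift.{1} J.cofBar = #X := by
    have hrfl : J.cofBar = sInf {c : Cardinal.{0} | ∃ X : Set (Set Ordinal.{0}),
        (X ⊆ J.mem ∧ ∀ A ∈ J.mem, ∃ x ⊆ X, #x < Cardinal.lift.{1} κ ∧ A ⊆ ⋃₀ x) ∧
        Cardinal.lift.{1} c = #X} := rfl
    obtain ⟨c, hc⟩ := hJmemcard
    have hne : {c : Cardinal.{0} | ∃ X : Set (Set Ordinal.{0}),
        (X ⊆ J.mem ∧ ∀ A ∈ J.mem, ∃ x ⊆ X, #x < Cardinal.lift.{1} κ ∧ A ⊆ ⋃₀ x) ∧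
        Cardinal.lift.{1} c = #X}.Nonempty := by
      refine ⟨c, J.mem, ⟨Subset.rfl, fun A hA => ⟨{A}, by simpa using hA, ?_, by simp⟩⟩, hc⟩
      rw [Cardinal.mk_singleton]
      exact lt_of_lt_of_le Cardinal.one_lt_aleph0 (aux_aleph0_le_lift hreg)
    have := csInf_mem hne
    rw [← hrfl] at this
    exact this
  obtain ⟨X, ⟨hXsub, hXcov⟩, hXcard⟩ := hwit
  -- a surjection-like map from T onto X
  have hle : #X ≤ #T := by
    rw [← hXcard, ← hTcard]
    exact Cardinal.lift_le.2 hcof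
  obtain ⟨i⟩ := (Cardinal.le_def _ _).1 hle
  set e : Set Ordinal.{0} → Set Ordinal.{0} := fun t =>
    if ht : ∃ x : ↥X, ((i x : ↥T) : Set Ordinal.{0}) = t
    then ((ht.choose : ↥X) : Set Ordinal.{0}) else {0} with he
  have he_mem : ∀ t, e t ∈ J.mem := by
    intro t
    by_cases ht : ∃ x : ↥X, ((i x : ↥T) : Set Ordinal.{0}) = t
    · simp only [he, dif_pos ht]
      exact hXsub ht.choose.2
    · simp only [he, dif_neg ht]
      exact h0mem
  have he_surj : ∀ Y ∈ X, ∃ t ∈ T, e t = Y := by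
    intro Y hY
    refine ⟨(i ⟨Y, hY⟩ : ↥T), (i ⟨Y, hY⟩ : ↥T).2, ?_⟩
    have ht : ∃ x : ↥X, ((i x : ↥T) : Set Ordinal.{0}) =
        ((i ⟨Y, hY⟩ : ↥T) : Set Ordinal.{0}) := ⟨⟨Y, hY⟩, rfl⟩
    simp only [he, dif_pos ht]
    have hspec := ht.choose_spec
    have hx : ht.choose = ⟨Y, hY⟩ := i.injective (Subtype.coe_injective hspec)
    rw [hx]
  -- the auxiliary cofinal set
  set Atil : Set (Set Ordinal.{0}) := {a | a ∈ smallSet κ lam ∧ supK κ a ∈ A ∧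
    ∀ t ∈ T, t ⊆ a → supK κ t < supK κ a → supK κ a ∉ e t} with hAtil
  have hAtilcof : ∀ c ∈ smallSet κ lam, ∃ b ∈ Atil, c ⊆ b := by
    intro c hc
    obtain ⟨hcsub, hcsmall⟩ := hc
    have hSmem : ⋃₀ (e '' {t ∈ T | t ⊆ c}) ∈ J.mem := by
      apply J.sUnion_mem
      · rintro _ ⟨t, -, rfl⟩
        exact he_mem t
      · exact lt_of_le_of_lt Cardinal.mk_image_le (hTsmall c ⟨hcsub, hcsmall⟩)
    obtain ⟨γ, hγA, hγS, hγgt⟩ := aux_plus_unbounded hreg J hAplus hSmem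
      (aux_supK_lt hreg hcsmall)
    have hγκ : γ < κ.ord := hAsub hγA
    have hsupb : supK κ (insert γ c) = γ := aux_supK_insert hγκ hγgt
    refine ⟨insert γ c, ⟨⟨?_, ?_⟩, ?_, ?_⟩, subset_insert _ _⟩
    · rintro o (rfl | ho)
      · exact lt_of_lt_of_le hγκ (Cardinal.ord_le_ord.2 hlt.le)
      · exact hcsub ho
    · refine lt_of_le_of_lt Cardinal.mk_insert_le ?_
      exact Cardinal.add_lt_of_lt (aux_aleph0_le_lift hreg) hcsmall
        (lt_of_lt_of_le Cardinal.one_lt_aleph0 (aux_aleph0_le_lift hreg))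
    · rw [hsupb]; exact hγA
    · intro t htT htsub htlt
      rw [hsupb] at htlt ⊢
      have hγt : γ ∉ t := fun hγt => absurd (aux_le_supK hγt hγκ) (not_le.2 htlt)
      have htc : t ⊆ c := fun o ho => (htsub ho).resolve_left (fun hoγ => hγt (hoγ ▸ ho))
      intro hmem
      exact hγS (mem_sUnion.2 ⟨e t, mem_image_of_mem e ⟨htT, htc⟩, hmem⟩)
  have hAtilplus : Atil ∈ plusOf κ lam (Ikl κ lam) := by
    constructor
    · exact fun a ha => ha.1
    · rintro ⟨-, a, ha, hnone⟩
      obtain ⟨b, hb, hab⟩ := hAtilcof a ha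
      exact hnone b hb hab
  obtain ⟨B, hBsub, hB⟩ := h (fun β γ => f β γ) Atil hAtilplus
  have hB'A : {o | ∃ a ∈ B, supK κ a = o} ⊆ A := by
    rintro o ⟨a, haB, rfl⟩
    exact (hBsub haB).2.1
  have hhomog : ∀ v : Fin 2, (∀ p ∈ pairsKK κ B, (fun β γ => f β γ) p.1 p.2 = v) →
      ∀ β ∈ {o | ∃ a ∈ B, supK κ a = o}, ∀ γ ∈ {o | ∃ a ∈ B, supK κ a = o},
      β < γ → f β γ = v := by
    intro v hv β hβ γ hγ hβγ
    obtain ⟨a, haB, hsa⟩ := hβ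
    obtain ⟨b, hbB, hsb⟩ := hγ
    exact hv (β, γ) ⟨a, haB, b, hbB, by rw [hsa, hsb]; exact hβγ, by rw [hsa, hsb]⟩
  rcases hB with ⟨hBplus, hhom⟩ | ⟨hOT, hhom⟩
  · -- 0-homogeneous case: the projected set is J-positive
    have hBcofinal : ∀ c ∈ smallSet κ lam, ∃ b ∈ B, c ⊆ b := by
      intro c hc
      by_contra hcon
      push_neg at hcon
      exact hBplus.2 ⟨hBplus.1, c, hc, fun b hb => hcon b hb⟩
    have hB'mem : {o | ∃ a ∈ B, supK κ a = o} ∉ J.mem := by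
      intro hmem
      obtain ⟨x, hxX, hxsmall, hxcov⟩ := hXcov _ hmem
      have hchoice : ∀ Y : ↥x, ∃ t, t ∈ T ∧ e t = (Y : Set Ordinal.{0}) :=
        fun Y => he_surj Y (hxX Y.2)
      choose τ hτT hτe using hchoice
      have hc₀small : #(⋃₀ (Set.range τ)) < Cardinal.lift.{1} κ := by
        refine aux_mk_sUnion_lt hreg (lt_of_le_of_lt Cardinal.mk_range_le hxsmall) ?_
        rintro s ⟨Y, rfl⟩
        exact (hTsub (hτT Y)).2
      have hδκ : supK κ (⋃₀ (Set.range τ)) + 1 < κ.ord :=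
        aux_succ_lt_ord hreg (aux_supK_lt hreg hc₀small)
      have hcs : insert (supK κ (⋃₀ (Set.range τ)) + 1) (⋃₀ (Set.range τ)) ∈
          smallSet κ lam := by
        constructor
        · rintro o (rfl | ho)
          · exact lt_of_lt_of_le hδκ (Cardinal.ord_le_ord.2 hlt.le)
          · obtain ⟨s, ⟨Y, rfl⟩, hos⟩ := ho
            exact (hTsub (hτT Y)).1 hos
        · refine lt_of_le_of_lt Cardinal.mk_insert_le ?_
          exact Cardinal.add_lt_of_lt (aux_aleph0_le_lift hreg) hc₀small
            (lt_of_lt_of_le Cardinal.one_lt_aleph0 (aux_aleph0_le_lift hreg))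
      obtain ⟨a, haB, hca⟩ := hBcofinal _ hcs
      have hsupmem : supK κ a ∈ {o | ∃ a ∈ B, supK κ a = o} := ⟨a, haB, rfl⟩
      obtain ⟨Y, hYx, hYmem⟩ := hxcov hsupmem
      have htsub : τ ⟨Y, hYx⟩ ⊆ a :=
        (subset_sUnion_of_mem (mem_range_self _)).trans
          ((subset_insert _ _).trans hca)
      have htlt : supK κ (τ ⟨Y, hYx⟩) < supK κ a := by
        refine lt_of_le_of_lt (aux_supK_mono (subset_sUnion_of_mem (mem_range_self _))) ?_
        exact lt_of_lt_of_le (lt_add_one _) (aux_le_supK (hca (mem_insert _ _)) hδκ)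
      have hnot := (hBsub haB).2.2 (τ ⟨Y, hYx⟩) (hτT ⟨Y, hYx⟩) htsub htlt
      rw [hτe ⟨Y, hYx⟩] at hnot
      exact hnot hYmem
    exact ⟨_, hB'A, Or.inl ⟨⟨fun o ho => hAsub (hB'A ho), hB'mem⟩, hhomog 0 hhom⟩⟩
  · exact ⟨_, hB'A, Or.inr ⟨hOT, hhomog 1 hhom⟩⟩

end PaperFormal
end

section
/- Suppose κ is weakly compact. Then H⁺ →_κ (H⁺)² for every ideal H on P_κ(λ) with cof(H) < cov(M_{κ,κ}); that is, for every F : [P_κ(λ)]_κ² → 2 and every A ∈ H⁺ there is B ∈ H⁺ ∩ P(A) on which F is constant on [B]_κ². -/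
open Cardinal Set

namespace PaperFormal




noncomputable section AuxLex

/-- first difference point of two sets of ordinals -/
def dpt (U V : Set Ordinal.{0}) : Ordinal.{0} := sInf {α | ¬ (α ∈ U ↔ α ∈ V)}

lemma diff_nonempty {U V : Set Ordinal.{0}} (h : U ≠ V) :
    {α : Ordinal.{0} | ¬ (α ∈ U ↔ α ∈ V)}.Nonempty := by
  by_contra hc
  rw [Set.not_nonempty_iff_eq_empty] at hc
  exact h (Set.ext fun α => not_not.mp
    (fun hn => Set.eq_empty_iff_forall_notMem.mp hc α hn))

lemma dpt_comm (U V : Set Ordinal.{0}) : dpt U V = dpt V U := by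
  unfold dpt; congr 1; ext α; constructor <;> (intro h hi; exact h hi.symm)

lemma dpt_spec {U V : Set Ordinal.{0}} (h : U ≠ V) :
    ¬ (dpt U V ∈ U ↔ dpt U V ∈ V) := csInf_mem (diff_nonempty h)

lemma dpt_agree {U V : Set Ordinal.{0}} {γ : Ordinal.{0}} (hγ : γ < dpt U V) :
    γ ∈ U ↔ γ ∈ V := by
  by_contra hn
  exact absurd (csInf_le' (show γ ∈ {α | ¬ (α ∈ U ↔ α ∈ V)} from hn)) (not_le.mpr hγ)

/-- lexicographic (strict) order -/
def lexLT (U V : Set Ordinal.{0}) : Prop := U ≠ V ∧ dpt U V ∈ V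

lemma lexLT_dpt_not_mem {U V : Set Ordinal.{0}} (h : lexLT U V) : dpt U V ∉ U :=
  fun hU => (dpt_spec h.1) ⟨fun _ => h.2, fun _ => hU⟩

lemma lexLT_total {U V : Set Ordinal.{0}} (h : U ≠ V) : lexLT U V ∨ lexLT V U := by
  by_cases hV : dpt U V ∈ V
  · exact Or.inl ⟨h, hV⟩
  · have hU : dpt U V ∈ U := by
      rcases Classical.em (dpt U V ∈ U) with h'|h'
      · exact h'
      · exact absurd ⟨fun hu => absurd hu h', fun hv => absurd hv hV⟩ (dpt_spec h)
    refine Or.inr ⟨h.symm, ?_⟩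
    rw [dpt_comm]; exact hU

lemma lexLT_asymm {U V : Set Ordinal.{0}} (h1 : lexLT U V) (h2 : lexLT V U) : False := by
  have h3 := h2.2
  rw [dpt_comm] at h3
  exact (dpt_spec h1.1) ⟨fun _ => h1.2, fun _ => h3⟩

lemma dpt_eq {U V : Set Ordinal.{0}} {d : Ordinal.{0}} (hd : ¬ (d ∈ U ↔ d ∈ V))
    (hb : ∀ γ < d, (γ ∈ U ↔ γ ∈ V)) : dpt U V = d := by
  have hne : U ≠ V := fun he => hd (by rw [he])
  refine le_antisymm ?_ ?_
  · exact csInf_le' (show d ∈ {α : Ordinal.{0} | ¬ (α ∈ U ↔ α ∈ V)} from hd)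
  by_contra hc
  push_neg at hc
  exact dpt_spec hne (hb _ hc)

lemma lexLT_trans {U V W : Set Ordinal.{0}} (h1 : lexLT U V) (h2 : lexLT V W) :
    lexLT U W := by
  rcases lt_trichotomy (dpt U V) (dpt V W) with hlt | heq | hgt
  · have hW : dpt U V ∈ W := (dpt_agree hlt).mp h1.2
    have hU : dpt U V ∉ U := lexLT_dpt_not_mem h1
    have hd : ¬ (dpt U V ∈ U ↔ dpt U V ∈ W) := fun hi => hU (hi.mpr hW)
    have hb : ∀ γ < dpt U V, (γ ∈ U ↔ γ ∈ W) :=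
      fun γ hγ => (dpt_agree hγ).trans (dpt_agree (hγ.trans hlt))
    exact ⟨fun he => hd (by rw [he]), by rw [dpt_eq hd hb]; exact hW⟩
  · exact absurd (heq ▸ h1.2) (lexLT_dpt_not_mem h2)
  · have hU : dpt V W ∉ U := fun h => (lexLT_dpt_not_mem h2) ((dpt_agree hgt).mp h)
    have hd : ¬ (dpt V W ∈ U ↔ dpt V W ∈ W) := fun hi => hU (hi.mpr h2.2)
    have hb : ∀ γ < dpt V W, (γ ∈ U ↔ γ ∈ W) :=
      fun γ hγ => (dpt_agree (hγ.trans hgt)).trans (dpt_agree hγ)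
    exact ⟨fun he => hd (by rw [he]), by rw [dpt_eq hd hb]; exact h2.2⟩

lemma lexLT_restrict {U V : Set Ordinal.{0}} (h : lexLT U V) (δ : Ordinal.{0}) :
    (U ∩ Iio δ = V ∩ Iio δ) ∨ lexLT (U ∩ Iio δ) (V ∩ Iio δ) := by
  by_cases hδ : dpt U V < δ
  · right
    have hd : ¬ (dpt U V ∈ U ∩ Iio δ ↔ dpt U V ∈ V ∩ Iio δ) := by
      simp only [Set.mem_inter_iff, Set.mem_Iio]
      intro hi
      exact lexLT_dpt_not_mem h (hi.mpr ⟨h.2, hδ⟩).1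
    have hb : ∀ γ < dpt U V, (γ ∈ U ∩ Iio δ ↔ γ ∈ V ∩ Iio δ) := by
      intro γ hγ
      simp only [Set.mem_inter_iff, Set.mem_Iio]
      exact and_congr_left fun _ => dpt_agree hγ
    exact ⟨fun he => hd (by rw [he]), by rw [dpt_eq hd hb]; exact ⟨h.2, hδ⟩⟩
  · left
    ext γ
    simp only [Set.mem_inter_iff, Set.mem_Iio]
    constructor
    · rintro ⟨hg, hgδ⟩
      exact ⟨(dpt_agree (lt_of_lt_of_le hgδ (not_lt.mp hδ))).mp hg, hgδ⟩
    · rintro ⟨hg, hgδ⟩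
      exact ⟨(dpt_agree (lt_of_lt_of_le hgδ (not_lt.mp hδ))).mpr hg, hgδ⟩

lemma lexLT_compl {U V Z : Set Ordinal.{0}} (h : lexLT U V) (hV : V ⊆ Z) :
    lexLT (Z \ V) (Z \ U) := by
  have hzd : dpt U V ∈ Z := hV h.2
  have hd : ¬ (dpt U V ∈ Z \ V ↔ dpt U V ∈ Z \ U) := by
    simp only [Set.mem_diff]
    intro hi
    exact (hi.mpr ⟨hzd, lexLT_dpt_not_mem h⟩).2 h.2
  have hb : ∀ γ < dpt U V, (γ ∈ Z \ V ↔ γ ∈ Z \ U) := by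
    intro γ hγ
    simp only [Set.mem_diff]
    have := dpt_agree (U := U) (V := V) hγ
    tauto
  refine ⟨fun he => hd (by rw [he]), ?_⟩
  rw [dpt_eq hd hb]
  exact ⟨hzd, lexLT_dpt_not_mem h⟩

end AuxLex




noncomputable section AuxCard

lemma isRegular_lift {κ : Cardinal.{0}} (h : κ.IsRegular) :
    (Cardinal.lift.{1} κ).IsRegular := by
  constructor
  · rw [← Cardinal.lift_aleph0.{1,0}]
    exact Cardinal.lift_le.mpr h.1
  · rw [← Cardinal.lift_ord, ← Ordinal.lift_cof]
    exact Cardinal.lift_le.mpr h.2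

lemma sSup_lt_ord' {κ : Cardinal.{0}} (hreg : κ.IsRegular) {s : Set Ordinal.{0}}
    (hsub : s ⊆ Iio κ.ord) (hcard : #s < Cardinal.lift.{1} κ) : sSup s < κ.ord := by
  rcases s.eq_empty_or_nonempty with rfl | hne
  · rw [csSup_empty, Ordinal.bot_eq_zero, ← Cardinal.ord_zero]
    exact Cardinal.ord_lt_ord.mpr (hreg.pos)
  · obtain ⟨c, hc⟩ := Cardinal.mem_range_lift_of_le hcard.le
    have hcκ : c < κ := by
      rw [← Cardinal.lift_lt.{_,1}]
      rw [hc]; exact hcard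
    have hmk : #(ULift.{1,0} c.ord.ToType) = #s := by
      rw [Cardinal.mk_uLift, Cardinal.mk_toType, Cardinal.card_ord, hc]
    obtain ⟨e⟩ := Cardinal.eq.mp hmk
    have hbdd : BddAbove (Set.range fun i : c.ord.ToType => ((e ⟨i⟩ : s) : Ordinal)) := by
      refine ⟨κ.ord, ?_⟩
      rintro x ⟨i, rfl⟩
      exact le_of_lt (hsub (e ⟨i⟩).2)
    have hsup : (⨆ i : c.ord.ToType, ((e ⟨i⟩ : s) : Ordinal)) < κ.ord := by
      apply Cardinal.iSup_lt_ord_of_isRegular hreg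
      · rw [Cardinal.mk_toType, Cardinal.card_ord]; exact hcκ
      exact fun i => hsub (e ⟨i⟩).2
    refine lt_of_le_of_lt (csSup_le hne ?_) hsup
    intro x hx
    have h3 := le_ciSup hbdd ((e.symm ⟨x, hx⟩).down)
    have h4 : e ⟨(e.symm ⟨x, hx⟩).down⟩ = ⟨x, hx⟩ := by
      have h5 : (⟨(e.symm ⟨x, hx⟩).down⟩ : ULift.{1,0} c.ord.ToType) = e.symm ⟨x, hx⟩ := rfl
      rw [h5, Equiv.apply_symm_apply]
    rw [h4] at h3
    exact h3

lemma mk_boundedSubsets_le (δ : Ordinal.{0}) :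
    #{s : Set Ordinal.{0} // s ⊆ Iio δ} ≤ 2 ^ Cardinal.lift.{1} δ.card := by
  have h1 : #{s : Set Ordinal.{0} // s ⊆ Iio δ} ≤ #(Set (Iio δ)) := by
    refine Cardinal.mk_le_of_injective
      (f := fun s => {γ : (Iio δ) | (γ : Ordinal.{0}) ∈ s.1}) ?_
    intro s s' he
    apply Subtype.ext
    ext α
    have he' : {γ : (Iio δ) | (γ : Ordinal.{0}) ∈ s.1} = {γ : (Iio δ) | (γ : Ordinal.{0}) ∈ s'.1} := he
    constructor
    · intro hα
      have hαδ : α ∈ Iio δ := s.2 hα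
      have h2 : (⟨α, hαδ⟩ : Iio δ) ∈ {γ : (Iio δ) | (γ : Ordinal.{0}) ∈ s.1} := hα
      rw [he'] at h2; exact h2
    · intro hα
      have hαδ : α ∈ Iio δ := s'.2 hα
      have h2 : (⟨α, hαδ⟩ : Iio δ) ∈ {γ : (Iio δ) | (γ : Ordinal.{0}) ∈ s'.1} := hα
      rw [← he'] at h2; exact h2
  calc #{s : Set Ordinal.{0} // s ⊆ Iio δ} ≤ #(Set (Iio δ)) := h1
  _ = 2 ^ #(Iio δ) := Cardinal.mk_set
  _ = 2 ^ Cardinal.lift.{1} δ.card := by rw [Ordinal.mk_Iio_ordinal]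

end AuxCard


noncomputable section AuxInacc

lemma ord_lt_one_add (o : Ordinal.{0}) : o < o + 1 := by
  rw [Ordinal.add_one_eq_succ]; exact Order.lt_succ o

lemma lex_key {w : Ordinal.{0} → Set Ordinal.{0}} {κo : Ordinal.{0}}
    (hw1 : ∀ ξ η, ξ < η → η < κo → lexLT (w ξ) (w η))
    (hsucc : ∀ ξ, ξ < κo → ξ + 1 < κo)
    {ξ η : Ordinal.{0}} (hξη : ξ < η) (hη : η < κo)
    (hd : dpt (w ξ) (w (ξ + 1)) = dpt (w η) (w (η + 1)))
    (hs : w ξ ∩ Iio (dpt (w ξ) (w (ξ + 1))) = w η ∩ Iio (dpt (w η) (w (η + 1)))) :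
    False := by
  have hsle : ξ + 1 ≤ η := by
    rw [Ordinal.add_one_eq_succ]; exact Order.succ_le_of_lt hξη
  have h1 : lexLT (w ξ) (w (ξ + 1)) := hw1 _ _ (ord_lt_one_add ξ) (lt_of_le_of_lt hsle hη)
  have h2 : lexLT (w η) (w (η + 1)) := hw1 _ _ (ord_lt_one_add η) (hsucc η hη)
  have hdnξ : dpt (w ξ) (w (ξ + 1)) ∉ w ξ := lexLT_dpt_not_mem h1
  have hdξ1 : dpt (w ξ) (w (ξ + 1)) ∈ w (ξ + 1) := h1.2
  have hdnη : dpt (w ξ) (w (ξ + 1)) ∉ w η := by rw [hd]; exact lexLT_dpt_not_mem h2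
  have hagr : ∀ γ, γ < dpt (w ξ) (w (ξ + 1)) → (γ ∈ w η ↔ γ ∈ w (ξ + 1)) := by
    intro γ hγ
    have a1 : γ ∈ w ξ ↔ γ ∈ w (ξ + 1) := dpt_agree hγ
    have a2 : γ ∈ w ξ ↔ γ ∈ w η := by
      constructor
      · intro hγξ
        exact ((Set.ext_iff.mp hs γ).mp ⟨hγξ, hγ⟩).1
      · intro hγη
        exact ((Set.ext_iff.mp hs γ).mpr ⟨hγη, by rw [← hd]; exact hγ⟩).1
    exact a2.symm.trans a1
  have hlex : lexLT (w η) (w (ξ + 1)) := by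
    have hdne : ¬ (dpt (w ξ) (w (ξ + 1)) ∈ w η ↔ dpt (w ξ) (w (ξ + 1)) ∈ w (ξ + 1)) :=
      fun hi => hdnη (hi.mpr hdξ1)
    refine ⟨fun he => hdne (by rw [he]), ?_⟩
    rw [dpt_eq hdne hagr]
    exact hdξ1
  rcases eq_or_lt_of_le hsle with he | hlt2
  · rw [← he] at hlex
    exact hlex.1 rfl
  · exact lexLT_asymm (hw1 _ _ hlt2 hη) hlex

lemma inacc {κ : Cardinal.{0}} (hreg : κ.IsRegular) (hwc : WeaklyCompact κ) :
    ∀ c : Cardinal.{0}, c < κ → 2 ^ c < κ := by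
  classical
  by_contra hc
  push_neg at hc
  obtain ⟨c1, hc1κ, hc1'⟩ := hc
  have hS : {c : Cardinal.{0} | c < κ ∧ κ ≤ 2 ^ c}.Nonempty := ⟨c1, hc1κ, hc1'⟩
  obtain ⟨hc₀κ, hκ2⟩ := csInf_mem hS
  set c₀ := sInf {c : Cardinal.{0} | c < κ ∧ κ ≤ 2 ^ c} with hc₀def
  have hmin : ∀ d : Cardinal.{0}, d < c₀ → d < κ → 2 ^ d < κ := by
    intro d hd hdκ
    by_contra h
    exact absurd (csInf_le' (show d ∈ {c : Cardinal.{0} | c < κ ∧ κ ≤ 2 ^ c} from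
      ⟨hdκ, not_lt.mp h⟩)) (not_le.mpr hd)
  have h1 : #(Iio κ.ord) ≤ #(Set (Iio c₀.ord)) := by
    rw [Ordinal.mk_Iio_ordinal, Cardinal.card_ord, Cardinal.mk_set,
      Ordinal.mk_Iio_ordinal, Cardinal.card_ord]
    calc Cardinal.lift.{1} κ ≤ Cardinal.lift.{1} (2 ^ c₀) := Cardinal.lift_le.mpr hκ2
    _ = 2 ^ Cardinal.lift.{1} c₀ := by rw [Cardinal.lift_power, Cardinal.lift_two]
  obtain ⟨e0⟩ := (Cardinal.le_def _ _).mp h1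
  set E : Ordinal.{0} → Set Ordinal.{0} :=
    fun α => if h : α < κ.ord then Subtype.val '' (e0 ⟨α, h⟩ : Set (Iio c₀.ord)) else ∅ with hE
  have hEsub : ∀ α, E α ⊆ Iio c₀.ord := by
    intro α x hx
    by_cases h : α < κ.ord
    · simp only [hE, dif_pos h] at hx
      obtain ⟨y, _, rfl⟩ := hx
      exact y.2
    · simp only [hE, dif_neg h] at hx
      exact absurd hx (Set.notMem_empty x)
  have hEinj : ∀ α β, α < κ.ord → β < κ.ord → E α = E β → α = β := by
    intro α β hα hβ he
    simp only [hE, dif_pos hα, dif_pos hβ] at he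
    have h2 : (e0 ⟨α, hα⟩ : Set (Iio c₀.ord)) = e0 ⟨β, hβ⟩ :=
      Subtype.val_injective.image_injective he
    exact Subtype.ext_iff.mp (e0.injective h2)
  obtain ⟨A₁, hA₁sub, hOT, i, hhom⟩ := hwc
    (fun α β => if lexLT (E α) (E β) then 1 else 0)
  obtain ⟨g, hgmono, hgim⟩ := hOT
  have hgA : ∀ ξ, ξ < κ.ord → g ξ ∈ A₁ := fun ξ hξ => hgim ▸ Set.mem_image_of_mem g hξ
  have hgκ : ∀ ξ, ξ < κ.ord → g ξ < κ.ord := fun ξ hξ => hA₁sub (hgA ξ hξ)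
  have hginj : ∀ ξ η, ξ < η → η < κ.ord → g ξ < g η :=
    fun ξ η h hη => hgmono ξ (h.trans hη) η hη h
  have hne : ∀ ξ η, ξ < η → η < κ.ord → E (g ξ) ≠ E (g η) := by
    intro ξ η h hη heq
    exact absurd (hEinj _ _ (hgκ ξ (h.trans hη)) (hgκ η hη) heq)
      (ne_of_lt (hginj ξ η h hη))
  have hcol : ∀ ξ η, ξ < η → η < κ.ord →
      (if lexLT (E (g ξ)) (E (g η)) then (1 : Fin 2) else 0) = i :=
    fun ξ η h hη => hhom (g ξ) (hgA ξ (h.trans hη)) (g η) (hgA η hη) (hginj ξ η h hη)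
  have hi01 : i = 0 ∨ i = 1 := by
    rcases i with ⟨_ | _ | n, hn⟩
    · exact Or.inl rfl
    · exact Or.inr rfl
    · exact absurd hn (by omega)
  have hwex : ∃ w : Ordinal.{0} → Set Ordinal.{0},
      (∀ ξ η, ξ < η → η < κ.ord → lexLT (w ξ) (w η)) ∧
      (∀ ξ, ξ < κ.ord → w ξ ⊆ Iio c₀.ord) := by
    rcases hi01 with hi | hi
    · refine ⟨fun ξ => Iio c₀.ord \ E (g ξ), fun ξ η h hη => ?_,
        fun ξ _ => Set.diff_subset⟩
      have hcc := hcol ξ η h hη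
      rw [hi] at hcc
      have hnl : ¬ lexLT (E (g ξ)) (E (g η)) := by
        intro hl; rw [if_pos hl] at hcc; exact absurd hcc (by decide)
      have hlr : lexLT (E (g η)) (E (g ξ)) :=
        (lexLT_total (hne ξ η h hη)).resolve_left hnl
      exact lexLT_compl hlr (hEsub _)
    · refine ⟨fun ξ => E (g ξ), fun ξ η h hη => ?_, fun ξ _ => hEsub _⟩
      have hcc := hcol ξ η h hη
      rw [hi] at hcc
      by_contra hn
      rw [if_neg hn] at hcc
      exact absurd hcc (by decide)
  obtain ⟨w, hw1, hw2⟩ := hwex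
  have hsucc : ∀ ξ, ξ < κ.ord → ξ + 1 < κ.ord := by
    intro ξ hξ
    rw [Ordinal.add_one_eq_succ]
    exact (Cardinal.isSuccLimit_ord hreg.aleph0_le).succ_lt hξ
  have hdlt : ∀ ξ, ξ < κ.ord → dpt (w ξ) (w (ξ + 1)) < c₀.ord := by
    intro ξ hξ
    exact hw2 (ξ + 1) (hsucc ξ hξ) (hw1 _ _ (ord_lt_one_add ξ) (hsucc ξ hξ)).2
  set Fib : (Iio c₀.ord) → Set (Iio κ.ord) :=
    fun dd => {ξp : (Iio κ.ord) | dpt (w ξp.1) (w (ξp.1 + 1)) = dd.1} with hFib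
  have hcover : (⋃ dd, Fib dd) = Set.univ := by
    ext ξp
    simp only [Set.mem_iUnion, Set.mem_univ, iff_true]
    exact ⟨⟨dpt (w ξp.1) (w (ξp.1 + 1)), hdlt ξp.1 ξp.2⟩, rfl⟩
  have hfibsmall : ∀ dd : (Iio c₀.ord), #(Fib dd) < Cardinal.lift.{1} κ := by
    intro dd
    have hinj : Function.Injective
        (fun ξf : Fib dd => (⟨w ξf.1.1 ∩ Iio dd.1, Set.inter_subset_right⟩ :
          {s : Set Ordinal.{0} // s ⊆ Iio dd.1})) := by
      intro ξf ηf he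
      have he' : w ξf.1.1 ∩ Iio dd.1 = w ηf.1.1 ∩ Iio dd.1 := congrArg Subtype.val he
      have hdξ : dpt (w ξf.1.1) (w (ξf.1.1 + 1)) = dd.1 := ξf.2
      have hdη : dpt (w ηf.1.1) (w (ηf.1.1 + 1)) = dd.1 := ηf.2
      rcases lt_trichotomy ξf.1.1 ηf.1.1 with h | h | h
      · exact absurd (lex_key hw1 hsucc h ηf.1.2 (hdξ.trans hdη.symm)
          (by rw [hdξ, hdη]; exact he')) not_false
      · exact Subtype.ext (Subtype.ext h)
      · exact absurd (lex_key hw1 hsucc h ξf.1.2 (hdη.trans hdξ.symm)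
          (by rw [hdξ, hdη]; exact he'.symm)) not_false
    calc #(Fib dd) ≤ #{s : Set Ordinal.{0} // s ⊆ Iio dd.1} :=
        Cardinal.mk_le_of_injective hinj
    _ ≤ 2 ^ Cardinal.lift.{1} (dd.1).card := mk_boundedSubsets_le _
    _ = Cardinal.lift.{1} (2 ^ (dd.1).card) := by
        rw [Cardinal.lift_power, Cardinal.lift_two]
    _ < Cardinal.lift.{1} κ := by
        apply Cardinal.lift_lt.mpr
        exact hmin _ (Cardinal.lt_ord.mp dd.2) ((Cardinal.lt_ord.mp dd.2).trans hc₀κ)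
  have hbig : #(@Set.univ (Iio κ.ord)) < Cardinal.lift.{1} κ := by
    rw [← hcover]
    refine lt_of_le_of_lt (Cardinal.mk_iUnion_le _) ?_
    apply Cardinal.mul_lt_of_lt (isRegular_lift hreg).aleph0_le
    · rw [Ordinal.mk_Iio_ordinal, Cardinal.card_ord]
      exact Cardinal.lift_lt.mpr hc₀κ
    · exact Cardinal.iSup_lt_of_isRegular (isRegular_lift hreg)
        (by rw [Ordinal.mk_Iio_ordinal, Cardinal.card_ord]; exact Cardinal.lift_lt.mpr hc₀κ)
        hfibsmall
  rw [Cardinal.mk_univ, Ordinal.mk_Iio_ordinal, Cardinal.card_ord] at hbig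
  exact lt_irrefl _ hbig

end AuxInacc


noncomputable section AuxBranch

open Classical in
/-- indicator function of a set of ordinals, `Fin 2`-valued -/
def indf (s : Set Ordinal.{0}) : Ordinal.{0} → Fin 2 :=
  fun α => if α ∈ s then 1 else 0

lemma fin_two_cases (v : Fin 2) : v = 0 ∨ v = 1 := by omega

lemma g_ge_self {κo : Ordinal.{0}} {g : Ordinal.{0} → Ordinal.{0}}
    (hg : ∀ i < κo, ∀ j < κo, i < j → g i < g j) : ∀ ξ, ξ < κo → ξ ≤ g ξ := by
  intro ξ
  induction ξ using Ordinal.induction with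
  | _ ξ IH =>
    intro hξ
    by_contra hc
    push_neg at hc
    have h1 : g ξ ≤ g (g ξ) := IH (g ξ) hc (hc.trans hξ)
    have h2 : g (g ξ) < g ξ := hg (g ξ) (hc.trans hξ) ξ hξ hc
    exact absurd (h1.trans_lt h2) (lt_irrefl _)

lemma level_nonempty {κ : Cardinal.{0}} (hreg : κ.IsRegular)
    (hinacc : ∀ c : Cardinal.{0}, c < κ → 2 ^ c < κ)
    {Hm : Set (Set (Set Ordinal.{0}))}
    (hsubm : ∀ A ∈ Hm, ∀ B ⊆ A, B ∈ Hm)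
    (hsU : ∀ X : Set (Set (Set Ordinal.{0})), X ⊆ Hm → #X < Cardinal.lift.{1} κ → ⋃₀ X ∈ Hm)
    {F : Ordinal.{0} → Set Ordinal.{0} → Fin 2} {A : Set (Set Ordinal.{0})}
    (hAn : A ∉ Hm) :
    ∀ δ, δ < κ.ord → ∃ s : Set Ordinal.{0}, s ⊆ Iio δ ∧
      {b | b ∈ A ∧ ∀ α, α < δ → F α b = indf s α} ∉ Hm := by
  intro δ hδ
  by_contra hc
  push_neg at hc
  set X : Set (Set (Set Ordinal.{0})) :=
    (fun sp : {s : Set Ordinal.{0} // s ⊆ Iio δ} =>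
      {b | b ∈ A ∧ ∀ α, α < δ → F α b = indf sp.1 α}) '' Set.univ with hX
  have hXsub : X ⊆ Hm := by
    rintro x ⟨sp, _, rfl⟩
    exact hc sp.1 sp.2
  have hXcard : #X < Cardinal.lift.{1} κ := by
    refine lt_of_le_of_lt (Cardinal.mk_image_le) ?_
    rw [Cardinal.mk_univ]
    calc #{s : Set Ordinal.{0} // s ⊆ Iio δ} ≤ 2 ^ Cardinal.lift.{1} δ.card :=
        mk_boundedSubsets_le δ
    _ = Cardinal.lift.{1} (2 ^ δ.card) := by rw [Cardinal.lift_power, Cardinal.lift_two]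
    _ < Cardinal.lift.{1} κ := Cardinal.lift_lt.mpr (hinacc _ (Cardinal.lt_ord.mp hδ))
  have hA : A ⊆ ⋃₀ X := by
    intro b hb
    refine ⟨{b' | b' ∈ A ∧ ∀ α, α < δ → F α b' = indf {α | α < δ ∧ F α b = 1} α}, ?_, ?_⟩
    · exact ⟨⟨{α | α < δ ∧ F α b = 1}, fun α hα => hα.1⟩, Set.mem_univ _, rfl⟩
    · refine ⟨hb, ?_⟩
      intro α hα
      unfold indf
      rcases fin_two_cases (F α b) with h0 | h1
      · rw [if_neg, h0]
        intro hmem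
        rw [hmem.2] at h0
        exact absurd h0 (by decide)
      · rw [if_pos ⟨hα, h1⟩, h1]
  exact hAn (hsubm _ (hsU X hXsub hXcard) A hA)

lemma stab {κ : Cardinal.{0}} (hreg : κ.IsRegular) {u : Ordinal.{0} → Set Ordinal.{0}}
    (hmono : ∀ ξ η, ξ < η → η < κ.ord → lexLT (u ξ) (u η) ∨ u ξ = u η) :
    ∀ δ, δ < κ.ord → ∃ ξs, ξs < κ.ord ∧
      ∀ η, ξs ≤ η → η < κ.ord → u η ∩ Iio δ = u ξs ∩ Iio δ := by
  intro δ
  induction δ using Ordinal.induction with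
  | _ δ IH =>
  intro hδ
  rcases Ordinal.zero_or_succ_or_isSuccLimit δ with rfl | ⟨δ₀, rfl⟩ | hlim
  · refine ⟨0, ?_, ?_⟩
    · rw [← Cardinal.ord_zero]; exact Cardinal.ord_lt_ord.mpr hreg.pos
    · intro η _ _
      ext γ
      simp [not_lt_zero]
  · have hδ₀δ : δ₀ < Order.succ δ₀ := Order.lt_succ δ₀
    obtain ⟨ξ₀, hξ₀, hst₀⟩ := IH δ₀ hδ₀δ (hδ₀δ.trans hδ)
    have ept : ∀ γ, γ < δ₀ → ∀ η1, ξ₀ ≤ η1 → η1 < κ.ord → (γ ∈ u η1 ↔ γ ∈ u ξ₀) := by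
      intro γ hγ η1 h1 h2
      have e1 := hst₀ η1 h1 h2
      constructor
      · intro hm; exact ((Set.ext_iff.mp e1 γ).mp ⟨hm, hγ⟩).1
      · intro hm; exact ((Set.ext_iff.mp e1 γ).mpr ⟨hm, hγ⟩).1
    have hbit : ∀ η η', ξ₀ ≤ η → η ≤ η' → η' < κ.ord → δ₀ ∈ u η → δ₀ ∈ u η' := by
      intro η η' hη hηη' hη' hmem
      rcases eq_or_lt_of_le hηη' with rfl | hlt
      · exact hmem
      by_contra hno
      have hηκ : η < κ.ord := hlt.trans hη'
      rcases hmono η η' hlt hη' with hl | he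
      · rcases lexLT_restrict hl (Order.succ δ₀) with heq | hll
        · have hmm : δ₀ ∈ u η' ∩ Iio (Order.succ δ₀) := by
            rw [← heq]; exact ⟨hmem, Order.lt_succ δ₀⟩
          exact hno hmm.1
        · have hag : ∀ γ, γ < δ₀ →
              (γ ∈ u η ∩ Iio (Order.succ δ₀) ↔ γ ∈ u η' ∩ Iio (Order.succ δ₀)) := by
            intro γ hγ
            simp only [Set.mem_inter_iff, Set.mem_Iio]
            constructor
            · rintro ⟨h1, h2⟩
              exact ⟨(ept γ hγ η' (hη.trans hlt.le) hη').mpr ((ept γ hγ η hη hηκ).mp h1), h2⟩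
            · rintro ⟨h1, h2⟩
              exact ⟨(ept γ hγ η hη hηκ).mpr ((ept γ hγ η' (hη.trans hlt.le) hη').mp h1), h2⟩
          have hd : ¬ (δ₀ ∈ u η ∩ Iio (Order.succ δ₀) ↔ δ₀ ∈ u η' ∩ Iio (Order.succ δ₀)) := by
            intro hi
            exact hno (hi.mp ⟨hmem, Order.lt_succ δ₀⟩).1
          have := hll.2
          rw [dpt_eq hd hag] at this
          exact hno this.1
      · rw [he] at hmem
        exact hno hmem
    by_cases hex : ∃ η, ξ₀ ≤ η ∧ η < κ.ord ∧ δ₀ ∈ u η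
    · obtain ⟨η₀, hη₀ξ, hη₀κ, hmem⟩ := hex
      refine ⟨η₀, hη₀κ, ?_⟩
      intro η hη hηκ
      ext γ
      simp only [Set.mem_inter_iff, Set.mem_Iio]
      constructor
      · rintro ⟨h1, h2⟩
        refine ⟨?_, h2⟩
        rcases lt_or_eq_of_le (Order.lt_succ_iff.mp h2) with hγ | rfl
        · exact (ept γ hγ η₀ hη₀ξ hη₀κ).mpr ((ept γ hγ η (hη₀ξ.trans hη) hηκ).mp h1)
        · exact hmem
      · rintro ⟨h1, h2⟩
        refine ⟨?_, h2⟩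
        rcases lt_or_eq_of_le (Order.lt_succ_iff.mp h2) with hγ | rfl
        · exact (ept γ hγ η (hη₀ξ.trans hη) hηκ).mpr ((ept γ hγ η₀ hη₀ξ hη₀κ).mp h1)
        · exact hbit η₀ η hη₀ξ hη hηκ hmem
    · push_neg at hex
      refine ⟨ξ₀, hξ₀, ?_⟩
      intro η hη hηκ
      ext γ
      simp only [Set.mem_inter_iff, Set.mem_Iio]
      constructor
      · rintro ⟨h1, h2⟩
        refine ⟨?_, h2⟩
        rcases lt_or_eq_of_le (Order.lt_succ_iff.mp h2) with hγ | rfl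
        · exact (ept γ hγ η hη hηκ).mp h1
        · exact absurd h1 (hex η hη hηκ)
      · rintro ⟨h1, h2⟩
        refine ⟨?_, h2⟩
        rcases lt_or_eq_of_le (Order.lt_succ_iff.mp h2) with hγ | rfl
        · exact (ept γ hγ η hη hηκ).mpr h1
        · exact absurd h1 (hex ξ₀ le_rfl hξ₀)
  · have hch : ∀ δp : (Iio δ), ∃ ξs, ξs < κ.ord ∧ ∀ η, ξs ≤ η → η < κ.ord →
        u η ∩ Iio δp.1 = u ξs ∩ Iio δp.1 := fun δp => IH δp.1 δp.2 (δp.2.trans hδ)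
    choose Ξ hΞκ hΞst using hch
    have hSsub : Set.range Ξ ⊆ Iio κ.ord := by rintro x ⟨δp, rfl⟩; exact hΞκ δp
    have hScard : #(Set.range Ξ) < Cardinal.lift.{1} κ := by
      refine lt_of_le_of_lt Cardinal.mk_range_le ?_
      rw [Ordinal.mk_Iio_ordinal]
      exact Cardinal.lift_lt.mpr (Cardinal.lt_ord.mp hδ)
    have hsup : sSup (Set.range Ξ) < κ.ord := sSup_lt_ord' hreg hSsub hScard
    have hbddS : BddAbove (Set.range Ξ) := ⟨κ.ord, fun x hx => (hSsub hx).le⟩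
    refine ⟨sSup (Set.range Ξ), hsup, ?_⟩
    intro η hη hηκ
    have hpt : ∀ γ, γ < δ → (γ ∈ u η ↔ γ ∈ u (sSup (Set.range Ξ))) := by
      intro γ hγ
      have hγ1 : γ + 1 < δ := by
        rw [Ordinal.add_one_eq_succ]; exact hlim.succ_lt hγ
      have hle : Ξ ⟨γ + 1, hγ1⟩ ≤ sSup (Set.range Ξ) := le_csSup hbddS ⟨⟨γ + 1, hγ1⟩, rfl⟩
      have e1 := hΞst ⟨γ + 1, hγ1⟩ η (hle.trans hη) hηκ
      have e2 := hΞst ⟨γ + 1, hγ1⟩ (sSup (Set.range Ξ)) hle hsup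
      have hγlt : γ < γ + 1 := ord_lt_one_add γ
      constructor
      · intro hm
        have h3 := ((Set.ext_iff.mp e1 γ).mp ⟨hm, hγlt⟩).1
        exact ((Set.ext_iff.mp e2 γ).mpr ⟨h3, hγlt⟩).1
      · intro hm
        have h3 := ((Set.ext_iff.mp e2 γ).mp ⟨hm, hγlt⟩).1
        exact ((Set.ext_iff.mp e1 γ).mpr ⟨h3, hγlt⟩).1
    ext γ
    simp only [Set.mem_inter_iff, Set.mem_Iio]
    constructor
    · rintro ⟨h1, h2⟩
      exact ⟨(hpt γ h2).mp h1, h2⟩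
    · rintro ⟨h1, h2⟩
      exact ⟨(hpt γ h2).mpr h1, h2⟩

end AuxBranch


noncomputable section AuxBranch2

lemma exists_branch {κ : Cardinal.{0}} (hreg : κ.IsRegular) (hwc : WeaklyCompact κ)
    {Hm : Set (Set (Set Ordinal.{0}))}
    (hsubm : ∀ A ∈ Hm, ∀ B ⊆ A, B ∈ Hm)
    (hsU : ∀ X : Set (Set (Set Ordinal.{0})), X ⊆ Hm → #X < Cardinal.lift.{1} κ → ⋃₀ X ∈ Hm)
    {F : Ordinal.{0} → Set Ordinal.{0} → Fin 2} {A : Set (Set Ordinal.{0})}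
    (hAn : A ∉ Hm) :
    ∃ Y : Set Ordinal.{0}, ∀ δ, δ < κ.ord →
      {b | b ∈ A ∧ ∀ α, α < δ → F α b = indf Y α} ∉ Hm := by
  classical
  have hinacc := inacc hreg hwc
  have hlev := level_nonempty hreg hinacc hsubm hsU hAn (F := F)
  have hlev' : ∀ β : Ordinal.{0}, ∃ s : Set Ordinal.{0}, β < κ.ord →
      (s ⊆ Iio β ∧ {b | b ∈ A ∧ ∀ α, α < β → F α b = indf s α} ∉ Hm) := by
    intro β
    by_cases h : β < κ.ord
    · obtain ⟨s, h1, h2⟩ := hlev β h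
      exact ⟨s, fun _ => ⟨h1, h2⟩⟩
    · exact ⟨∅, fun hh => absurd hh h⟩
  choose sfun hsfun using hlev'
  set nd : Ordinal.{0} → Set Ordinal.{0} := fun β => sfun β ∪ {β} with hnd
  have hndsup : ∀ β, β < κ.ord → sSup (nd β) = β := by
    intro β hβ
    have hbdd : BddAbove (nd β) := by
      refine ⟨β, ?_⟩
      rintro x (hx | rfl)
      · exact ((hsfun β hβ).1 hx).le
      · exact le_rfl
    apply le_antisymm
    · apply csSup_le ⟨β, Or.inr rfl⟩
      rintro x (hx | rfl)
      · exact ((hsfun β hβ).1 hx).le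
      · exact le_rfl
    · exact le_csSup hbdd (Or.inr rfl)
  have hndsub : ∀ β, β < κ.ord → nd β ⊆ Iio κ.ord := by
    intro β hβ x hx
    rcases hx with hx | rfl
    · exact ((hsfun β hβ).1 hx).trans hβ
    · exact hβ
  have hndinj : ∀ β β', β < κ.ord → β' < κ.ord → nd β = nd β' → β = β' := by
    intro β β' hβ hβ' he
    rw [← hndsup β hβ, ← hndsup β' hβ', he]
  obtain ⟨A₁, hA₁sub, hOT, i, hhom⟩ := hwc
    (fun α β => if lexLT (nd α) (nd β) then 1 else 0)
  obtain ⟨g, hgmono, hgim⟩ := hOT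
  have hgA : ∀ ξ, ξ < κ.ord → g ξ ∈ A₁ := fun ξ hξ => hgim ▸ Set.mem_image_of_mem g hξ
  have hgκ : ∀ ξ, ξ < κ.ord → g ξ < κ.ord := fun ξ hξ => hA₁sub (hgA ξ hξ)
  have hginj : ∀ ξ η, ξ < η → η < κ.ord → g ξ < g η :=
    fun ξ η h hη => hgmono ξ (h.trans hη) η hη h
  have hgge := g_ge_self hgmono
  have hcol : ∀ ξ η, ξ < η → η < κ.ord →
      (if lexLT (nd (g ξ)) (nd (g η)) then (1 : Fin 2) else 0) = i :=
    fun ξ η h hη => hhom (g ξ) (hgA ξ (h.trans hη)) (g η) (hgA η hη) (hginj ξ η h hη)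
  have hne : ∀ ξ η, ξ < η → η < κ.ord → nd (g ξ) ≠ nd (g η) := by
    intro ξ η h hη heq
    exact absurd (hndinj _ _ (hgκ ξ (h.trans hη)) (hgκ η hη) heq) (ne_of_lt (hginj ξ η h hη))
  set u : Ordinal.{0} → Set Ordinal.{0} := fun ξ => nd (g ξ) with hu
  have hstab : ∀ δ, δ < κ.ord → ∃ ξs, ξs < κ.ord ∧
      ∀ η, ξs ≤ η → η < κ.ord → u η ∩ Iio δ = u ξs ∩ Iio δ := by
    rcases fin_two_cases i with hi | hi
    · set v : Ordinal.{0} → Set Ordinal.{0} := fun ξ => Iio κ.ord \ u ξ with hv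
      have hvmono : ∀ ξ η, ξ < η → η < κ.ord → lexLT (v ξ) (v η) ∨ v ξ = v η := by
        intro ξ η h hη
        left
        have hcc := hcol ξ η h hη
        rw [hi] at hcc
        have hnl : ¬ lexLT (u ξ) (u η) := by
          intro hl; rw [if_pos hl] at hcc; exact absurd hcc (by decide)
        have hlr : lexLT (u η) (u ξ) := (lexLT_total (hne ξ η h hη)).resolve_left hnl
        exact lexLT_compl hlr (hndsub _ (hgκ ξ (h.trans hη)))
      have hstv := stab hreg hvmono
      intro δ hδ
      obtain ⟨ξs, hξs, hst⟩ := hstv δ hδ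
      refine ⟨ξs, hξs, ?_⟩
      intro η hη hηκ
      have h2 := hst η hη hηκ
      ext γ
      simp only [Set.mem_inter_iff, Set.mem_Iio]
      constructor
      · rintro ⟨h1, hγ⟩
        refine ⟨?_, hγ⟩
        have hγκ : γ < κ.ord := (hndsub _ (hgκ η hηκ)) h1
        by_contra hno
        have h3 : γ ∈ v η ∩ Iio δ := by rw [h2]; exact ⟨⟨hγκ, hno⟩, hγ⟩
        exact h3.1.2 h1
      · rintro ⟨h1, hγ⟩
        refine ⟨?_, hγ⟩
        have hγκ : γ < κ.ord := (hndsub _ (hgκ ξs hξs)) h1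
        by_contra hno
        have h3 : γ ∈ v η ∩ Iio δ := ⟨⟨hγκ, hno⟩, hγ⟩
        rw [h2] at h3
        exact h3.1.2 h1
    · apply stab hreg
      intro ξ η h hη
      left
      have hcc := hcol ξ η h hη
      rw [hi] at hcc
      by_contra hn
      rw [if_neg hn] at hcc
      exact absurd hcc (by decide)
  have hstab' : ∀ δ : Ordinal.{0}, ∃ ξs : Ordinal.{0}, δ < κ.ord →
      (ξs < κ.ord ∧ ∀ η, ξs ≤ η → η < κ.ord → u η ∩ Iio δ = u ξs ∩ Iio δ) := by
    intro δ
    by_cases h : δ < κ.ord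
    · obtain ⟨ξs, h1, h2⟩ := hstab δ h
      exact ⟨ξs, fun _ => ⟨h1, h2⟩⟩
    · exact ⟨0, fun hh => absurd hh h⟩
  choose Ξ hΞ using hstab'
  have hsucc : ∀ ξ : Ordinal.{0}, ξ < κ.ord → ξ + 1 < κ.ord := by
    intro ξ hξ
    rw [Ordinal.add_one_eq_succ]
    exact (Cardinal.isSuccLimit_ord hreg.aleph0_le).succ_lt hξ
  set Y : Set Ordinal.{0} := {α | α < κ.ord ∧ α ∈ u (Ξ (α + 1))} with hY
  have hYpt : ∀ δ, δ < κ.ord → ∀ α, α < δ → (α ∈ Y ↔ α ∈ u (Ξ δ)) := by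
    intro δ hδ α hα
    have hακ : α < κ.ord := hα.trans hδ
    have hα1 : α + 1 < κ.ord := hsucc α hακ
    obtain ⟨hΞ1κ, hΞ1st⟩ := hΞ (α + 1) hα1
    obtain ⟨hΞδκ, hΞδst⟩ := hΞ δ hδ
    have hη'κ : max (Ξ (α + 1)) (Ξ δ) < κ.ord := max_lt hΞ1κ hΞδκ
    have e1 := hΞ1st (max (Ξ (α + 1)) (Ξ δ)) (le_max_left _ _) hη'κ
    have e2 := hΞδst (max (Ξ (α + 1)) (Ξ δ)) (le_max_right _ _) hη'κ
    have hαlt1 : α < α + 1 := ord_lt_one_add α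
    constructor
    · rintro ⟨_, hm⟩
      have h3 : α ∈ u (max (Ξ (α + 1)) (Ξ δ)) := ((Set.ext_iff.mp e1 α).mpr ⟨hm, hαlt1⟩).1
      exact ((Set.ext_iff.mp e2 α).mp ⟨h3, hα⟩).1
    · intro hm
      have h3 : α ∈ u (max (Ξ (α + 1)) (Ξ δ)) := ((Set.ext_iff.mp e2 α).mpr ⟨hm, hα⟩).1
      exact ⟨hακ, ((Set.ext_iff.mp e1 α).mp ⟨h3, hαlt1⟩).1⟩
  refine ⟨Y, ?_⟩
  intro δ hδ hmem
  obtain ⟨hΞδκ, hΞδst⟩ := hΞ δ hδ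
  have hη'κ : max (Ξ δ) δ < κ.ord := max_lt hΞδκ hδ
  have hgη' : g (max (Ξ δ) δ) < κ.ord := hgκ _ hη'κ
  have hδg : δ ≤ g (max (Ξ δ) δ) := le_trans (le_max_right _ _) (hgge _ hη'κ)
  apply (hsfun (g (max (Ξ δ) δ)) hgη').2
  apply hsubm _ hmem
  rintro b ⟨hbA, hbm⟩
  refine ⟨hbA, ?_⟩
  intro α hα
  have h4 := hbm α (lt_of_lt_of_le hα hδg)
  rw [h4]
  have hiff : α ∈ sfun (g (max (Ξ δ) δ)) ↔ α ∈ Y := by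
    have h5 : α ∈ Y ↔ α ∈ u (Ξ δ) := hYpt δ hδ α hα
    have e2 := hΞδst (max (Ξ δ) δ) (le_max_left _ _) hη'κ
    have h6 : α ∈ u (Ξ δ) ↔ α ∈ u (max (Ξ δ) δ) := by
      constructor
      · intro hm; exact ((Set.ext_iff.mp e2 α).mpr ⟨hm, hα⟩).1
      · intro hm; exact ((Set.ext_iff.mp e2 α).mp ⟨hm, hα⟩).1
    have h7 : α ∈ u (max (Ξ δ) δ) ↔ α ∈ sfun (g (max (Ξ δ) δ)) := by
      constructor
      · rintro (hm | rfl)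
        · exact hm
        · exact absurd (lt_of_lt_of_le hα hδg) (lt_irrefl _)
      · intro hm; exact Or.inl hm
    rw [h5, h6, h7]
  unfold indf
  by_cases hc : α ∈ Y
  · rw [if_pos hc, if_pos (hiff.mpr hc)]
  · rw [if_neg hc, if_neg (fun hx => hc (hiff.mp hx))]

end AuxBranch2


noncomputable section AuxFinal

lemma mk_subtype_subsets_le {X : Type 1} (S : Set X) {c : Cardinal.{0}}
    (hS : #S ≤ Cardinal.lift.{1} c) :
    #{T : Set X // T ⊆ S} ≤ Cardinal.lift.{1} (2 ^ c) := by
  have h1 : #{T : Set X // T ⊆ S} ≤ #(Set S) := by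
    refine Cardinal.mk_le_of_injective (f := fun T => {γ : S | (γ : X) ∈ T.1}) ?_
    intro T T' he
    have he' : {γ : S | (γ : X) ∈ T.1} = {γ : S | (γ : X) ∈ T'.1} := he
    apply Subtype.ext
    ext z
    constructor
    · intro hz
      have hzS : z ∈ S := T.2 hz
      have h2 : (⟨z, hzS⟩ : S) ∈ {γ : S | (γ : X) ∈ T.1} := hz
      rw [he'] at h2; exact h2
    · intro hz
      have hzS : z ∈ S := T'.2 hz
      have h2 : (⟨z, hzS⟩ : S) ∈ {γ : S | (γ : X) ∈ T'.1} := hz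
      rw [← he'] at h2; exact h2
  refine h1.trans ?_
  rw [Cardinal.mk_set]
  calc (2 : Cardinal.{1}) ^ #S ≤ 2 ^ Cardinal.lift.{1} c :=
      Cardinal.power_le_power_left (by norm_num) hS
  _ = Cardinal.lift.{1} (2 ^ c) := by rw [Cardinal.lift_power, Cardinal.lift_two]

end AuxFinal

/-- Suppose `κ` is weakly compact. Then `H⁺ →_κ (H⁺)²` for every ideal `H` on
`P_κ(λ)` with `cof(H) < cov(M_{κ,κ})`. -/
theorem arrowPConst_of_weaklyCompact (κ lam : Cardinal.{0}) (hreg : κ.IsRegular)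
    (huc : ℵ₀ < κ) (hlt : κ < lam) (hwc : WeaklyCompact κ) :
    ∀ H : IdealP κ lam, H.cof < covM κ κ → ArrowPConst κ lam H.mem := by
  classical
  intro H hcof F A hA
  obtain ⟨hAs, hAn⟩ := hA
  obtain ⟨Y, hY⟩ := exists_branch hreg hwc H.subset_mem H.sUnion_mem hAn (F := F)
  have haleph : (ℵ₀ : Cardinal.{1}) ≤ Cardinal.lift.{1} κ := by
    rw [← Cardinal.lift_aleph0.{1,0}]
    exact Cardinal.lift_le.mpr hreg.1
  have hsucc : ∀ ξ : Ordinal.{0}, ξ < κ.ord → ξ + 1 < κ.ord := fun ξ hξ => by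
    rw [Ordinal.add_one_eq_succ]
    exact (Cardinal.isSuccLimit_ord hreg.aleph0_le).succ_lt hξ
  have htwo : (2 : Cardinal.{1}) < Cardinal.lift.{1} κ := by
    refine lt_of_lt_of_le ?_ haleph
    exact Cardinal.lt_aleph0.mpr ⟨2, by norm_num⟩
  have hsupK : ∀ b ∈ smallSet κ lam, supK κ b < κ.ord := by
    intro b hb
    apply sSup_lt_ord' hreg (Set.inter_subset_right)
    exact lt_of_le_of_lt (Cardinal.mk_le_mk_of_subset Set.inter_subset_left) hb.2
  have hsupK_ge : ∀ b : Set Ordinal.{0}, ∀ γ, γ ∈ b → γ < κ.ord → γ ≤ supK κ b := by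
    intro b γ hγb hγκ
    refine le_csSup ⟨κ.ord, ?_⟩ ⟨hγb, hγκ⟩
    rintro y ⟨-, hy⟩
    exact hy.le
  have hLow : ∀ δ, δ < κ.ord → {b | b ∈ smallSet κ lam ∧ supK κ b ≤ δ} ∈ H.mem := by
    intro δ hδ
    apply H.fine
    refine ⟨fun b hb => hb.1, ⟨{δ + 1}, ⟨?_, ?_⟩, ?_⟩⟩
    · intro γ hγ
      rw [Set.mem_singleton_iff] at hγ
      subst hγ
      exact lt_of_lt_of_le (hsucc δ hδ) (Cardinal.ord_le_ord.mpr hlt.le)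
    · rw [Cardinal.mk_singleton]
      exact lt_of_lt_of_le Cardinal.one_lt_aleph0 haleph
    · rintro b ⟨hbs, hble⟩ hsub
      have hδ1b : δ + 1 ∈ b := hsub rfl
      have h3 := hsupK_ge b (δ + 1) hδ1b (hsucc δ hδ)
      exact absurd (h3.trans hble) (not_le.mpr (ord_lt_one_add δ))
  have hsetA : ∀ δ, δ < κ.ord →
      {b | b ∈ A ∧ ∀ α, α < δ → F α b = indf Y α} ∉ H.mem := hY
  have hpairmem : ∀ C ∈ H.mem, ∀ L ∈ H.mem, C ∪ L ∈ H.mem := by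
    intro C hC L hL
    have h2 : ⋃₀ {C, L} ∈ H.mem := by
      apply H.sUnion_mem
      · rintro z (rfl | rfl)
        · exact hC
        · exact hL
      · refine lt_of_le_of_lt Cardinal.mk_insert_le ?_
        rw [Cardinal.mk_singleton, one_add_one_eq_two]
        exact htwo
    rwa [Set.sUnion_pair] at h2
  set Df : Set (Set Ordinal.{0}) → Set (Set Ordinal.{0}) := fun C =>
    {x | x ∈ cantor κ ∧ ∃ b, b ∈ A ∧ supK κ b ∈ x ∧
      (∀ α, α ∈ x → α < supK κ b → F α b = indf Y α) ∧ b ∉ C} with hDf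
  have hDO : ∀ C ∈ H.mem, DenseOpen κ κ (Df C) := by
    intro C hC
    refine ⟨fun x hx => hx.1, ?_, ?_⟩
    · rintro x ⟨hxc, b, hbA, hbx, hbm, hbC⟩
      have hbs : b ∈ smallSet κ lam := hAs hbA
      have hβ : supK κ b < κ.ord := hsupK b hbs
      have hβ1 : supK κ b + 1 < κ.ord := hsucc _ hβ
      refine ⟨Iio (supK κ b + 1), x ∩ Iio (supK κ b + 1),
        ⟨fun γ hγ => hγ.trans hβ1, Set.inter_subset_right, ?_⟩, ⟨hxc, rfl⟩, ?_⟩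
      · rw [Ordinal.mk_Iio_ordinal]
        exact Cardinal.lift_lt.mpr (Cardinal.lt_ord.mp hβ1)
      · rintro x' ⟨hx'c, hx'a⟩
        refine ⟨hx'c, b, hbA, ?_, ?_, hbC⟩
        · have hm : supK κ b ∈ x ∩ Iio (supK κ b + 1) := ⟨hbx, ord_lt_one_add _⟩
          rw [← hx'a] at hm
          exact hm.1
        · intro α hαx' hαβ
          have hm : α ∈ x ∩ Iio (supK κ b + 1) := by
            rw [← hx'a]
            exact ⟨hαx', hαβ.trans (ord_lt_one_add _)⟩
          exact hbm α hm.1 hαβ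
    · rintro a t ⟨has, hts, hac⟩
      have hδa : sSup a < κ.ord := sSup_lt_ord' hreg has hac
      have hδ : sSup a + 1 < κ.ord := hsucc _ hδa
      have hCL : C ∪ {b | b ∈ smallSet κ lam ∧ supK κ b ≤ sSup a + 1} ∈ H.mem :=
        hpairmem C hC _ (hLow _ hδ)
      have hW : ¬ ({b | b ∈ A ∧ ∀ α, α < sSup a + 1 → F α b = indf Y α} ⊆
          C ∪ {b | b ∈ smallSet κ lam ∧ supK κ b ≤ sSup a + 1}) := by
        intro hsub
        exact hsetA _ hδ (H.subset_mem _ hCL _ hsub)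
      obtain ⟨b, hbA', hbn⟩ := Set.not_subset.mp hW
      obtain ⟨hbA, hbm⟩ := hbA'
      have hbs : b ∈ smallSet κ lam := hAs hbA
      have hβ : supK κ b < κ.ord := hsupK b hbs
      have hbC : b ∉ C := fun h => hbn (Or.inl h)
      have hbL : ¬ (b ∈ smallSet κ lam ∧ supK κ b ≤ sSup a + 1) :=
        fun h => hbn (Or.inr h)
      have hβgt : sSup a + 1 < supK κ b := by
        by_contra hle
        exact hbL ⟨hbs, not_lt.mp hle⟩
      refine ⟨t ∪ {supK κ b}, ⟨⟨?_, ?_⟩, ?_⟩⟩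
      · rintro γ (hγ | rfl)
        · exact has (hts hγ)
        · exact hβ
      · ext γ
        simp only [Set.mem_inter_iff, Set.mem_union, Set.mem_singleton_iff]
        constructor
        · rintro ⟨hγ | rfl, hγa⟩
          · exact hγ
          · exfalso
            have h3 : supK κ b ≤ sSup a := le_csSup ⟨κ.ord, fun y hy => (has hy).le⟩ hγa
            exact absurd ((ord_lt_one_add (sSup a)).trans hβgt) (not_lt.mpr h3)
        · intro hγ
          exact ⟨Or.inl hγ, hts hγ⟩
      · refine ⟨?_, b, hbA, Or.inr rfl, ?_, hbC⟩
        · rintro γ (hγ | rfl)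
          · exact has (hts hγ)
          · exact hβ
        · rintro α (hα | rfl) hαβ
          · have h3 : α ≤ sSup a := le_csSup ⟨κ.ord, fun y hy => (has hy).le⟩ (hts hα)
            exact hbm α (lt_of_le_of_lt h3 (ord_lt_one_add _))
          · exact absurd hαβ (lt_irrefl _)
  have hMg : ∀ C ∈ H.mem, Meager κ κ (cantor κ \ Df C) := by
    intro C hC
    refine ⟨Set.diff_subset, {Df C}, Set.singleton_nonempty _, ?_, ?_, ?_⟩
    · rw [Cardinal.mk_singleton]
      exact le_of_lt (lt_of_lt_of_le Cardinal.one_lt_aleph0 haleph)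
    · intro D' hD'
      rw [Set.mem_singleton_iff] at hD'
      subst hD'
      exact hDO C hC
    · rw [Set.sInter_singleton, Set.eq_empty_iff_forall_notMem]
      rintro z ⟨⟨_, h2⟩, h3⟩
      exact h2 h3
  have hmemcard : #(H.mem) ≤ Cardinal.lift.{1} ((2 : Cardinal.{0}) ^ ((2 : Cardinal.{0}) ^ lam)) := by
    have h1 : #(H.mem) ≤ #{T : Set (Set Ordinal.{0}) // T ⊆ smallSet κ lam} := by
      refine Cardinal.mk_le_of_injective
        (f := fun T : H.mem => (⟨T.1, H.subset_pk T.1 T.2⟩ :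
          {T : Set (Set Ordinal.{0}) // T ⊆ smallSet κ lam})) ?_
      intro T T' h
      have h' := congrArg Subtype.val h
      exact Subtype.ext h'
    have h2 : #(smallSet κ lam) ≤ Cardinal.lift.{1} (2 ^ lam) := by
      have h3 : #(smallSet κ lam) ≤ #{s : Set Ordinal.{0} // s ⊆ Iio lam.ord} := by
        refine Cardinal.mk_le_of_injective
          (f := fun b : smallSet κ lam => (⟨b.1, b.2.1⟩ :
            {s : Set Ordinal.{0} // s ⊆ Iio lam.ord})) ?_
        intro b b' h
        have h' := congrArg Subtype.val h
        exact Subtype.ext h'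
      refine h3.trans ((mk_boundedSubsets_le lam.ord).trans ?_)
      rw [Cardinal.card_ord, Cardinal.lift_power, Cardinal.lift_two]
    exact h1.trans (mk_subtype_subsets_le _ h2)
  have hcofne : {c : Cardinal.{0} | ∃ Xf : Set (Set (Set Ordinal.{0})),
      (Xf ⊆ H.mem ∧ ∀ A', A' ∈ H.mem ↔ ∃ B ∈ Xf, A' ⊆ B) ∧
      Cardinal.lift.{1} c = #Xf}.Nonempty := by
    obtain ⟨c0, hc0⟩ := Cardinal.mem_range_lift_of_le hmemcard
    exact ⟨c0, H.mem, ⟨subset_rfl, fun A' => ⟨fun h => ⟨A', h, subset_rfl⟩,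
      fun ⟨B, hB, hAB⟩ => H.subset_mem B hB A' hAB⟩⟩, hc0⟩
  have hXfmem : H.cof ∈ {c : Cardinal.{0} | ∃ Xf : Set (Set (Set Ordinal.{0})),
      (Xf ⊆ H.mem ∧ ∀ A', A' ∈ H.mem ↔ ∃ B ∈ Xf, A' ⊆ B) ∧
      Cardinal.lift.{1} c = #Xf} := csInf_mem hcofne
  obtain ⟨Xf, ⟨hXfsub, hXfcof⟩, hXfcard⟩ := hXfmem
  have hgen : ∃ x, x ∈ cantor κ ∧ ∀ C ∈ Xf, x ∈ Df C := by
    by_contra hng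
    push_neg at hng
    have hcov : ⋃₀ ((fun C => cantor κ \ Df C) '' Xf) = cantor κ := by
      apply Set.Subset.antisymm
      · rintro z ⟨W, ⟨C, hC, rfl⟩, hzW⟩
        exact hzW.1
      · intro z hz
        obtain ⟨C, hCXf, hzn⟩ := hng z hz
        exact ⟨cantor κ \ Df C, ⟨C, hCXf, rfl⟩, hz, hzn⟩
    have hYmcard : #((fun C => cantor κ \ Df C) '' Xf) ≤ Cardinal.lift.{1} H.cof := by
      rw [show Cardinal.lift.{1} H.cof = #Xf from hXfcard]
      exact Cardinal.mk_image_le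
    obtain ⟨cY, hcY⟩ := Cardinal.mem_range_lift_of_le hYmcard
    have h5 : covM κ κ ≤ cY := by
      apply csInf_le'
      refine ⟨(fun C => cantor κ \ Df C) '' Xf, ⟨?_, hcov⟩, hcY⟩
      rintro W ⟨C, hC, rfl⟩
      exact hMg C (hXfsub hC)
    have h6 : cY ≤ H.cof := by
      rw [← Cardinal.lift_le.{1}, hcY]
      exact hYmcard
    exact absurd (lt_of_le_of_lt (h5.trans h6) hcof) (lt_irrefl _)
  obtain ⟨x, hxc, hxg⟩ := hgen
  set BB : Set (Set Ordinal.{0}) := {b | b ∈ A ∧ supK κ b ∈ x ∧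
    ∀ α, α ∈ x → α < supK κ b → F α b = indf Y α} with hBB
  have hkey : ∀ i : Fin 2, ∀ p ∈ pairsK κ {b | b ∈ BB ∧ indf Y (supK κ b) = i},
      F p.1 p.2 = i := by
    intro i p hp
    obtain ⟨a', ⟨ha'B, ha'i⟩, b, ⟨hbB, hbi⟩, hab, rfl⟩ := hp
    show F (supK κ a') b = i
    have h1 : F (supK κ a') b = indf Y (supK κ a') :=
      hbB.2.2 (supK κ a') ha'B.2.1 hab
    rw [h1, ha'i]
  have hsplit : BB ⊆ {b | b ∈ BB ∧ indf Y (supK κ b) = 0} ∪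
      {b | b ∈ BB ∧ indf Y (supK κ b) = 1} := by
    intro b hb
    rcases fin_two_cases (indf Y (supK κ b)) with h | h
    · exact Or.inl ⟨hb, h⟩
    · exact Or.inr ⟨hb, h⟩
  have hnotboth : {b | b ∈ BB ∧ indf Y (supK κ b) = 0} ∉ H.mem ∨
      {b | b ∈ BB ∧ indf Y (supK κ b) = 1} ∉ H.mem := by
    by_contra hb
    push_neg at hb
    have hBBm : BB ∈ H.mem := by
      apply H.subset_mem _ (hpairmem _ hb.1 _ hb.2) _ hsplit
    obtain ⟨C, hCXf, hBC⟩ := (hXfcof BB).mp hBBm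
    obtain ⟨-, b, hbA, hbx, hbm, hbC⟩ := hxg C hCXf
    exact hbC (hBC ⟨hbA, hbx, hbm⟩)
  rcases hnotboth with h | h
  · exact ⟨{b | b ∈ BB ∧ indf Y (supK κ b) = 0}, ⟨fun b hb => hAs hb.1.1, h⟩,
      fun b hb => hb.1.1, 0, hkey 0⟩
  · exact ⟨{b | b ∈ BB ∧ indf Y (supK κ b) = 1}, ⟨fun b hb => hAs hb.1.1, h⟩,
      fun b hb => hb.1.1, 1, hkey 1⟩


end PaperFormal
end

section
/- Suppose κ is a regular limit cardinal and H is an ideal on P_κ(λ) with cof(H) < cov(M_{κ,κ}). Then H⁺ →_κ [H⁺]_{κ⁺}²: for every F : [P_κ(λ)]_κ² → κ⁺ and every A ∈ H⁺ there is B ∈ H⁺ ∩ P(A) such that F''[B]_κ² ≠ κ⁺ (F omits some value on [B]_κ²). -/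
open Cardinal Set

namespace PaperFormal


section Aux

open Order

variable {κ lam : Cardinal.{0}}

/-- Any subset of `Iio κ.ord` of size `< κ` is bounded below `κ.ord`. -/
lemma exists_bound (hreg : κ.IsRegular) {s : Set Ordinal.{0}}
    (hsub : s ⊆ Iio κ.ord) (hcard : #s < Cardinal.lift.{1} κ) :
    ∃ γ < κ.ord, ∀ δ ∈ s, δ < γ := by
  obtain ⟨c, hc⟩ := Cardinal.mem_range_lift_of_le hcard.le
  have hce : Cardinal.lift.{1} #(Quotient.out c) = Cardinal.lift.{0} #(↥s) := by
    rw [Cardinal.mk_out, Cardinal.lift_id', hc]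
  obtain ⟨e⟩ := Cardinal.lift_mk_eq'.mp hce
  set f : Quotient.out c → Ordinal.{0} := fun i => (e i : Ordinal.{0}) with hf
  have hflt : ∀ i, f i < κ.ord := fun i => hsub (e i).2
  have hcκ : c < κ := by
    have := hc ▸ hcard
    exact Cardinal.lift_lt.mp this
  have hsup : iSup f < κ.ord := by
    apply Ordinal.iSup_lt_ord _ hflt
    rw [Cardinal.mk_out, hreg.cof_eq]
    exact hcκ
  refine ⟨Order.succ (iSup f), (Cardinal.isSuccLimit_ord hreg.aleph0_le).succ_lt hsup, ?_⟩
  intro δ hδ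
  have : δ ≤ iSup f := by
    have : f (e.symm ⟨δ, hδ⟩) = δ := by simp [hf]
    rw [← this]
    exact Ordinal.le_iSup f _
  exact lt_of_le_of_lt this (Order.lt_succ _)

lemma bddAbove_inter (κ : Cardinal.{0}) (b : Set Ordinal.{0}) :
    BddAbove (b ∩ Iio κ.ord) :=
  ⟨κ.ord, fun _ hy => le_of_lt hy.2⟩

/-- `supK κ b < κ.ord` for any small set `b`. -/
lemma supK_lt (hreg : κ.IsRegular) {b : Set Ordinal.{0}}
    (hb : #b < Cardinal.lift.{1} κ) : supK κ b < κ.ord := by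
  have hcard : #(b ∩ Iio κ.ord : Set Ordinal.{0}) < Cardinal.lift.{1} κ :=
    lt_of_le_of_lt (Cardinal.mk_le_mk_of_subset inter_subset_left) hb
  obtain ⟨γ, hγ, hbound⟩ := exists_bound hreg inter_subset_right hcard
  have : supK κ b ≤ γ := csSup_le' (fun δ hδ => (hbound δ hδ).le)
  exact lt_of_le_of_lt this hγ

lemma le_supK {κ : Cardinal.{0}} {b : Set Ordinal.{0}} {δ : Ordinal.{0}}
    (h1 : δ ∈ b) (h2 : δ < κ.ord) : δ ≤ supK κ b :=
  le_csSup (bddAbove_inter κ b) ⟨h1, h2⟩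

/-- Noncofinal sets are in the ideal. -/
lemma avoid_mem (H : IdealP κ lam) {a : Set Ordinal.{0}} (ha : a ∈ smallSet κ lam) :
    {b ∈ smallSet κ lam | ¬ a ⊆ b} ∈ H.mem :=
  H.fine ⟨sep_subset _ _, a, ha, fun _ hb => hb.2⟩

lemma singleton_small (hreg : κ.IsRegular) (hlt : κ < lam) {δ : Ordinal.{0}}
    (hδ : δ < lam.ord) : ({δ} : Set Ordinal.{0}) ∈ smallSet κ lam := by
  constructor
  · intro x hx; rw [mem_singleton_iff] at hx; subst hx; exact hδ
  · rw [Cardinal.mk_singleton]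
    exact lt_of_lt_of_le Cardinal.one_lt_aleph0
      (Cardinal.aleph0_le_lift.mpr hreg.aleph0_le)

/-- Each fiber of `supK` is in the ideal. -/
lemma supK_fiber_mem (hreg : κ.IsRegular) (hlt : κ < lam) (H : IdealP κ lam)
    {δ : Ordinal.{0}} (hδ : δ < κ.ord) :
    {b ∈ smallSet κ lam | supK κ b = δ} ∈ H.mem := by
  have hsucc : Order.succ δ < κ.ord := (Cardinal.isSuccLimit_ord hreg.aleph0_le).succ_lt hδ
  have hsucclam : Order.succ δ < lam.ord :=
    lt_of_lt_of_le hsucc (Cardinal.ord_le_ord.mpr hlt.le)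
  apply H.subset_mem _ (avoid_mem H (singleton_small hreg hlt hsucclam))
  intro b hb
  refine ⟨hb.1, fun hsub => ?_⟩
  have hmem : Order.succ δ ≤ supK κ b := le_supK (hsub rfl) hsucc
  rw [hb.2] at hmem
  exact absurd hmem (Order.lt_succ δ).not_ge

lemma union_mem (hreg : κ.IsRegular) (H : IdealP κ lam)
    {A B : Set (Set Ordinal.{0})} (hA : A ∈ H.mem) (hB : B ∈ H.mem) :
    A ∪ B ∈ H.mem := by
  have h := H.sUnion_mem {A, B} ?_ ?_
  · rwa [sUnion_pair] at h
  · rintro C hC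
    rcases hC with rfl | rfl
    · exact hA
    · exact hB
  · exact lt_of_lt_of_le ((finite_singleton B).insert A).lt_aleph0
      (Cardinal.aleph0_le_lift.mpr hreg.aleph0_le)

/-- The set of small sets whose `supK` lies in a small set `a` is in the ideal. -/
lemma supK_mem_small_mem (hreg : κ.IsRegular) (hlt : κ < lam) (H : IdealP κ lam)
    {a : Set Ordinal.{0}} (ha : a ⊆ Iio κ.ord) (hac : #a < Cardinal.lift.{1} κ) :
    {b ∈ smallSet κ lam | supK κ b ∈ a} ∈ H.mem := by
  have hU : ⋃₀ ((fun δ => {b ∈ smallSet κ lam | supK κ b = δ}) '' a) ∈ H.mem := by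
    apply H.sUnion_mem
    · rintro T ⟨δ, hδ, rfl⟩
      exact supK_fiber_mem hreg hlt H (ha hδ)
    · exact lt_of_le_of_lt Cardinal.mk_image_le hac
  apply H.subset_mem _ hU
  rintro b ⟨hb, hba⟩
  exact ⟨_, mem_image_of_mem _ hba, hb, rfl⟩

lemma exists_notMem_of_pos (H : IdealP κ lam) {A U : Set (Set Ordinal.{0})}
    (hApos : A ∉ H.mem) (hU : U ∈ H.mem) : ∃ b, b ∈ A ∧ b ∉ U := by
  by_contra h
  push_neg at h
  exact hApos (H.subset_mem U hU A h)

/-- There is a color `ξ < κ⁺` that is untrapped. -/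
lemma exists_untrapped (hreg : κ.IsRegular) (hlim : Order.IsSuccLimit κ) (hlt : κ < lam)
    (H : IdealP κ lam) {A : Set (Set Ordinal.{0})} (hApos : A ∉ H.mem)
    (F : Ordinal.{0} → Set Ordinal.{0} → Ordinal.{0}) :
    ∃ ξ < (Order.succ κ).ord, ∀ γ < κ.ord,
      {b ∈ A | ∀ δ, δ < γ → δ < supK κ b → F δ b ≠ ξ} ∉ H.mem := by
  by_contra hcon
  push_neg at hcon
  have hcon' : ∀ ξ : Ordinal.{0}, ∃ γ, γ < κ.ord ∧ (ξ < (Order.succ κ).ord →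
      {b ∈ A | ∀ δ, δ < γ → δ < supK κ b → F δ b ≠ ξ} ∈ H.mem) := by
    intro ξ
    by_cases h : ξ < (Order.succ κ).ord
    · obtain ⟨γ, h1, h2⟩ := hcon ξ h
      exact ⟨γ, h1, fun _ => h2⟩
    · exact ⟨0, hreg.ord_pos, fun hh => absurd hh h⟩
  choose g hg1 hg2 using hcon'
  set fib : Ordinal.{0} → Set Ordinal.{0} := fun γ => {ξ | ξ < (Order.succ κ).ord ∧ g ξ = γ}
    with hfib
  have hcover : Iio ((Order.succ κ).ord) ⊆ ⋃ γ ∈ Iio κ.ord, fib γ := by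
    intro ξ hξ
    exact mem_biUnion (hg1 ξ) ⟨hξ, rfl⟩
  have hbig : ∃ γ, γ < κ.ord ∧ Cardinal.lift.{1} κ < #(fib γ) := by
    by_contra h
    push_neg at h
    have hne : Nonempty (↥(Iio κ.ord)) := ⟨⟨0, hreg.ord_pos⟩⟩
    have h1 : Cardinal.lift.{1} (Order.succ κ) ≤ Cardinal.lift.{1} κ := by
      calc Cardinal.lift.{1} (Order.succ κ) = #(Iio ((Order.succ κ).ord)) := by
            rw [Ordinal.mk_Iio_ordinal, Cardinal.card_ord]
        _ ≤ #(⋃ γ ∈ Iio κ.ord, fib γ) := Cardinal.mk_le_mk_of_subset hcover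
        _ ≤ #(Iio κ.ord) * ⨆ γ : (Iio κ.ord), #(fib γ) := Cardinal.mk_biUnion_le fib _
        _ ≤ Cardinal.lift.{1} κ * Cardinal.lift.{1} κ := by
            apply mul_le_mul'
            · rw [Ordinal.mk_Iio_ordinal, Cardinal.card_ord]
            · exact ciSup_le fun γ => h γ.1 γ.2
        _ = Cardinal.lift.{1} κ :=
            Cardinal.mul_eq_self (Cardinal.aleph0_le_lift.mpr hreg.aleph0_le)
    have := Cardinal.lift_le.mp h1
    exact absurd (Order.succ_le_iff.mp this) (lt_irrefl κ)
  obtain ⟨γ', hγ', hbigγ⟩ := hbig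
  set ν : Cardinal.{0} := γ'.card with hν'
  have hν : ν < κ := Cardinal.lt_ord.mp hγ'
  have hsν : Order.succ ν < κ := hlim.succ_lt hν
  have hsub' : Cardinal.lift.{1} (Order.succ ν) ≤ #(fib γ') := by
    rw [Cardinal.lift_succ]
    exact Order.succ_le_of_lt ((Cardinal.lift_le.mpr hν.le).trans_lt hbigγ)
  obtain ⟨s, hssub, hscard⟩ := Cardinal.le_mk_iff_exists_subset.mp hsub'
  have hU : ⋃₀ ((fun ξ => {b ∈ A | ∀ δ, δ < γ' → δ < supK κ b → F δ b ≠ ξ}) '' s) ∈ H.mem := by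
    apply H.sUnion_mem
    · rintro T ⟨ξ, hξ, rfl⟩
      have h2 := hg2 ξ (hssub hξ).1
      rwa [(hssub hξ).2] at h2
    · refine lt_of_le_of_lt Cardinal.mk_image_le ?_
      rw [hscard]
      exact Cardinal.lift_lt.mpr hsν
  obtain ⟨b, hbA, hbU⟩ := exists_notMem_of_pos H hApos hU
  have hδsel : ∀ ξ ∈ s, ∃ δ, δ < γ' ∧ δ < supK κ b ∧ F δ b = ξ := by
    intro ξ hξ
    by_contra hno
    push_neg at hno
    exact hbU ⟨_, mem_image_of_mem _ hξ, hbA, fun δ h1 h2 => hno δ h1 h2⟩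
  choose d hd1 hd2 hd3 using hδsel
  have hinj : Function.Injective (fun z : ↥s => (⟨d z.1 z.2, hd1 z.1 z.2⟩ : ↥(Iio γ'))) := by
    rintro ⟨ξ1, h1⟩ ⟨ξ2, h2⟩ heq
    have heq' : d ξ1 h1 = d ξ2 h2 := congrArg Subtype.val heq
    apply Subtype.ext
    calc ξ1 = F (d ξ1 h1) b := (hd3 ξ1 h1).symm
      _ = F (d ξ2 h2) b := by rw [heq']
      _ = ξ2 := hd3 ξ2 h2
  have hcard2 : #(↥s) ≤ #(↥(Iio γ')) := Cardinal.mk_le_of_injective hinj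
  rw [hscard, Ordinal.mk_Iio_ordinal] at hcard2
  have := Cardinal.lift_le.mp hcard2
  exact absurd (Order.succ_le_iff.mp this) (lt_irrefl ν)

end Aux



section Main

variable {κ lam : Cardinal.{0}}

/-- The dense open set attached to `C ∈ X` and an untrapped color `ξ`. -/
lemma denseOpen_D (hreg : κ.IsRegular) (hlt : κ < lam) (H : IdealP κ lam)
    {A : Set (Set Ordinal.{0})} (hAsub : A ⊆ smallSet κ lam)
    (F : Ordinal.{0} → Set Ordinal.{0} → Ordinal.{0}) {ξ : Ordinal.{0}}
    (hunt : ∀ γ < κ.ord, {b ∈ A | ∀ δ, δ < γ → δ < supK κ b → F δ b ≠ ξ} ∉ H.mem)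
    {C : Set (Set Ordinal.{0})} (hC : C ∈ H.mem) :
    DenseOpen κ κ {y | y ⊆ Iio κ.ord ∧ ∃ b, b ∈ A ∧ b ∉ C ∧ supK κ b ∈ y ∧
      ∀ δ ∈ y, δ < supK κ b → F δ b ≠ ξ} := by
  refine ⟨fun y hy => hy.1, ?_, ?_⟩
  · -- openness
    rintro y ⟨hy, b, hbA, hbC, hby, hbav⟩
    have hβ : supK κ b < κ.ord := supK_lt hreg (hAsub hbA).2
    have hsβ : Order.succ (supK κ b) < κ.ord :=
      (Cardinal.isSuccLimit_ord hreg.aleph0_le).succ_lt hβ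
    refine ⟨Iio (Order.succ (supK κ b)), y ∩ Iio (Order.succ (supK κ b)), ⟨?_, ?_, ?_⟩, ⟨hy, rfl⟩, ?_⟩
    · intro δ hδ
      exact lt_of_lt_of_le hδ (Order.succ_le_of_lt hβ)
    · exact inter_subset_right
    · rw [Ordinal.mk_Iio_ordinal]
      exact Cardinal.lift_lt.mpr (Cardinal.lt_ord.mp hsβ)
    · rintro z ⟨hz, hzt⟩
      refine ⟨hz, b, hbA, hbC, ?_, ?_⟩
      · have : supK κ b ∈ y ∩ Iio (Order.succ (supK κ b)) := ⟨hby, mem_Iio.mpr (Order.lt_succ _)⟩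
        rw [← hzt] at this
        exact this.1
      · intro δ hδz hδlt
        have hδa : δ ∈ Iio (Order.succ (supK κ b)) := mem_Iio.mpr (lt_trans hδlt (Order.lt_succ _))
        have : δ ∈ y ∩ Iio (Order.succ (supK κ b)) := by
          rw [← hzt]; exact ⟨hδz, hδa⟩
        exact hbav δ this.1 hδlt
  · -- density
    rintro a t ⟨ha, hta, hac⟩
    obtain ⟨γ, hγ, hbound⟩ := exists_bound hreg ha hac
    have hjunk : {b ∈ smallSet κ lam | supK κ b ∈ a} ∈ H.mem :=
      supK_mem_small_mem hreg hlt H ha hac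
    have hG : {b ∈ A | ∀ δ, δ < γ → δ < supK κ b → F δ b ≠ ξ} ∉ H.mem := hunt γ hγ
    obtain ⟨b, hbG, hbU⟩ := exists_notMem_of_pos H hG
      (union_mem hreg H hC hjunk)
    obtain ⟨hbA, hbav⟩ := hbG
    have hbC : b ∉ C := fun h => hbU (Or.inl h)
    have hba : supK κ b ∉ a := fun h => hbU (Or.inr ⟨hAsub hbA, h⟩)
    have hβ : supK κ b < κ.ord := supK_lt hreg (hAsub hbA).2
    refine ⟨insert (supK κ b) t, ⟨?_, ?_⟩, ?_, b, hbA, hbC, mem_insert _ _, ?_⟩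
    · -- insert ⊆ Iio κ.ord
      rintro δ (rfl | hδt)
      · exact hβ
      · exact ha (hta hδt)
    · -- (insert (supK κ b) t) ∩ a = t
      apply Subset.antisymm
      · rintro δ ⟨(rfl | hδt), hδa⟩
        · exact absurd hδa hba
        · exact hδt
      · intro δ hδ
        exact ⟨Or.inr hδ, hta hδ⟩
    · rintro δ (rfl | hδt)
      · exact hβ
      · exact ha (hta hδt)
    · rintro δ (rfl | hδt) hlt'
      · exact absurd hlt' (lt_irrefl _)
      · exact hbav δ (hbound δ (hta hδt)) hlt'

lemma meager_compl_denseOpen (hreg : κ.IsRegular) {D : Set (Set Ordinal.{0})}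
    (hD : DenseOpen κ κ D) : Meager κ κ (cantor κ \ D) := by
  refine ⟨diff_subset, {D}, singleton_nonempty _, ?_, ?_, ?_⟩
  · rw [Cardinal.mk_singleton]
    exact le_trans Cardinal.one_lt_aleph0.le (Cardinal.aleph0_le_lift.mpr hreg.aleph0_le)
  · rintro D' rfl
    exact hD
  · rw [sInter_singleton]
    ext z
    simp only [mem_inter_iff, mem_diff, mem_empty_iff_false, iff_false]
    rintro ⟨⟨_, h⟩, h'⟩
    exact h h'

/-- `cof(H)` is attained. -/
lemma cof_attained (H : IdealP κ lam) :
    ∃ X : Set (Set (Set Ordinal.{0})), (X ⊆ H.mem ∧ ∀ A, A ∈ H.mem ↔ ∃ B ∈ X, A ⊆ B) ∧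
      Cardinal.lift.{1} H.cof = #X := by
  have hne : {c : Cardinal.{0} | ∃ X : Set (Set (Set Ordinal.{0})),
      (X ⊆ H.mem ∧ ∀ A, A ∈ H.mem ↔ ∃ B ∈ X, A ⊆ B) ∧ Cardinal.lift.{1} c = #X}.Nonempty := by
    have hsub1 : H.mem ⊆ 𝒫 (smallSet κ lam) := fun A hA => H.subset_pk A hA
    have hsmall : #(smallSet κ lam) ≤ (2 : Cardinal.{1}) ^ Cardinal.lift.{1} lam := by
      have h1 : smallSet κ lam ⊆ 𝒫 (Iio lam.ord) := fun a haa => haa.1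
      refine le_trans (Cardinal.mk_le_mk_of_subset h1) ?_
      rw [Cardinal.mk_powerset, Ordinal.mk_Iio_ordinal, Cardinal.card_ord]
    have hbound : #(H.mem) ≤ Cardinal.lift.{1} ((2 : Cardinal.{0}) ^ ((2 : Cardinal.{0}) ^ lam)) := by
      refine le_trans (Cardinal.mk_le_mk_of_subset hsub1) ?_
      rw [Cardinal.lift_power, Cardinal.lift_power, Cardinal.lift_two, Cardinal.mk_powerset]
      exact Cardinal.power_le_power_left two_ne_zero hsmall
    obtain ⟨c, hc⟩ := Cardinal.mem_range_lift_of_le hbound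
    refine ⟨c, H.mem, ⟨Subset.rfl, fun A => ⟨fun h => ⟨A, h, Subset.rfl⟩,
      fun ⟨B, hB, hAB⟩ => H.subset_mem B hB A hAB⟩⟩, hc⟩
  have := csInf_mem hne
  obtain ⟨X, hX, hXc⟩ := this
  exact ⟨X, hX, hXc⟩

end Main


/-- Suppose `κ` is a regular limit cardinal and `H` is an ideal on `P_κ(λ)`
with `cof(H) < cov(M_{κ,κ})`. Then `H⁺ →_κ [H⁺]_{κ⁺}²`. -/
theorem sqBrP_kappa_succ (κ lam : Cardinal.{0}) (hreg : κ.IsRegular) (huc : ℵ₀ < κ)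
    (hlim : Order.IsSuccLimit κ) (hlt : κ < lam) (H : IdealP κ lam) (hcof : H.cof < covM κ κ) :
    ∀ F : Ordinal.{0} → Set Ordinal.{0} → Ordinal.{0},
      (∀ p ∈ pairsK κ (smallSet κ lam), F p.1 p.2 < (Order.succ κ).ord) →
      ∀ A ∈ H.plus, ∃ B ∈ H.plus, B ⊆ A ∧
        {ξ | ∃ p ∈ pairsK κ B, F p.1 p.2 = ξ} ≠ Iio (Order.succ κ).ord := by
  intro F _ A hA
  obtain ⟨hAsub, hApos⟩ := hA
  -- an untrapped color
  obtain ⟨ξ, hξ, hunt⟩ := exists_untrapped hreg hlim hlt H hApos F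
  -- a cofinal family realizing cof(H)
  obtain ⟨X, ⟨hXsub, hXcof⟩, hXcard⟩ := cof_attained H
  -- the dense open sets and their meager complements
  set D : Set (Set Ordinal.{0}) → Set (Set Ordinal.{0}) := fun C =>
    {y | y ⊆ Iio κ.ord ∧ ∃ b, b ∈ A ∧ b ∉ C ∧ supK κ b ∈ y ∧
      ∀ δ ∈ y, δ < supK κ b → F δ b ≠ ξ} with hD
  have hDdense : ∀ C ∈ X, DenseOpen κ κ (D C) := fun C hC =>
    denseOpen_D hreg hlt H hAsub F hunt (hXsub hC)
  set Y : Set (Set (Set Ordinal.{0})) := (fun C => cantor κ \ D C) '' X with hY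
  -- Y cannot cover the Cantor space
  have hnc : ⋃₀ Y ≠ cantor κ := by
    intro hcover
    have hYmeager : ∀ W ∈ Y, Meager κ κ W := by
      rintro W ⟨C, hC, rfl⟩
      exact meager_compl_denseOpen hreg (hDdense C hC)
    have hYle : #Y ≤ Cardinal.lift.{1} H.cof := by
      rw [hXcard]
      exact Cardinal.mk_image_le
    obtain ⟨c, hc⟩ := Cardinal.mem_range_lift_of_le hYle
    have hmem : c ∈ {c : Cardinal.{0} | ∃ Y' : Set (Set (Set Ordinal.{0})),
        ((∀ W ∈ Y', Meager κ κ W) ∧ ⋃₀ Y' = cantor κ) ∧ Cardinal.lift.{1} c = #Y'} :=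
      ⟨Y, ⟨hYmeager, hcover⟩, hc⟩
    have h1 : covM κ κ ≤ c := csInf_le' hmem
    have h2 : c ≤ H.cof := by
      rw [← Cardinal.lift_le (a := c), hc, hXcard]
      exact Cardinal.mk_image_le
    exact absurd (lt_of_le_of_lt (h1.trans h2) hcof) (lt_irrefl _)
  -- get a generic point x
  have hsub : ⋃₀ Y ⊆ cantor κ := by
    rintro z ⟨W, ⟨C, hC, rfl⟩, hz⟩
    exact hz.1
  obtain ⟨x, hxc, hxY⟩ := exists_of_ssubset (ssubset_of_subset_of_ne hsub hnc)
  have hxD : ∀ C ∈ X, x ∈ D C := by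
    intro C hC
    by_contra hxD
    exact hxY ⟨cantor κ \ D C, ⟨C, hC, rfl⟩, hxc, hxD⟩
  -- the homogeneous-ish set B
  refine ⟨{b | b ∈ A ∧ supK κ b ∈ x ∧ ∀ δ ∈ x, δ < supK κ b → F δ b ≠ ξ}, ⟨?_, ?_⟩, ?_, ?_⟩
  · exact fun b hb => hAsub hb.1
  · -- B is positive
    intro hBmem
    obtain ⟨C, hCX, hBC⟩ := (hXcof _).mp hBmem
    obtain ⟨_, b, hbA, hbC, hbx, hbav⟩ := hxD C hCX
    exact hbC (hBC ⟨hbA, hbx, hbav⟩)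
  · exact fun b hb => hb.1
  · -- ξ is omitted
    intro heq
    have hξmem : ξ ∈ Iio (Order.succ κ).ord := hξ
    rw [← heq] at hξmem
    obtain ⟨p, hp, hFp⟩ := hξmem
    obtain ⟨a, ha, b, hb, hab, rfl⟩ := hp
    exact hb.2.2 (supK κ a) ha.2.1 hab hFp


end PaperFormal
end
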